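/- arXiv:1109.1064 — 7 statements merged into one kernel-verified Lean document; each statement's English description precedes it below -/
import Mathlib

section
/- The superextension λ(C₂×C₂) of the group C₂×C₂ is isomorphic to the semigroup (C₂⊔L₁)×C₂×C₂. -/
open Set

/-- An *upfamily* on `X`: a nonempty family of nonempty subsets of `X`
that is closed under taking supersets. -/
def IsUpfamily {X : Type*} (F : Set (Set X)) : Prop :=
  F.Nonempty ∧ (∀ A ∈ F, A.Nonempty) ∧ ∀ A ∈ F, ∀ B : Set X, A ⊆ B → B ∈ F

/-- The space `υ(X)` of upfamilies on `X`. -/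
def Upfamily (X : Type*) : Type _ := {F : Set (Set X) // IsUpfamily F}

/-- The extension of the binary operation of `X` to families of subsets of `X`:
`𝓐*𝓑 = ⟨⋃_{a ∈ A} a*B_a : A ∈ 𝓐, {B_a}_{a∈A} ⊆ 𝓑⟩`. -/
def upMul {X : Type*} [Mul X] (F G : Set (Set X)) : Set (Set X) :=
  {C | ∃ A ∈ F, ∃ B : X → Set X, (∀ a ∈ A, B a ∈ G) ∧ (⋃ a ∈ A, (fun y => a * y) '' B a) ⊆ C}

theorem IsUpfamily.upMul {X : Type*} [Mul X] {F G : Set (Set X)}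
    (hF : IsUpfamily F) (hG : IsUpfamily G) : IsUpfamily (upMul F G) := by
  obtain ⟨⟨A0, hA0⟩, hFne, hFup⟩ := hF
  obtain ⟨⟨B0, hB0⟩, hGne, hGup⟩ := hG
  refine ⟨⟨univ, A0, hA0, fun _ => B0, fun a _ => hB0, subset_univ _⟩, ?_, ?_⟩
  · rintro C ⟨A, hA, B, hB, hsub⟩
    obtain ⟨a, ha⟩ := hFne A hA
    obtain ⟨b, hb⟩ := hGne (B a) (hB a ha)
    exact ⟨a * b, hsub (mem_biUnion ha ⟨b, hb, rfl⟩)⟩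
  · rintro C ⟨A, hA, B, hB, hsub⟩ D hCD
    exact ⟨A, hA, B, hB, hsub.trans hCD⟩

/-- `υ(X)` is a semigroup under the extended operation. -/
instance {X : Type*} [Mul X] : Mul (Upfamily X) :=
  ⟨fun F G => ⟨upMul F.1 G.1, F.2.upMul G.2⟩⟩

/-- The embedding `X → υ(X)`, `x ↦ ⟨x⟩ = {A ⊆ X : x ∈ A}`. -/
def Upfamily.principal {X : Type*} (x : X) : Upfamily X :=
  ⟨{A | x ∈ A}, ⟨univ, mem_univ x⟩, fun A hA => ⟨x, hA⟩, fun _ hA _ hAB => hAB hA⟩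

/-- An upfamily is linked if any two of its members intersect. -/
def Upfamily.Linked {X : Type*} (F : Upfamily X) : Prop :=
  ∀ A ∈ F.1, ∀ B ∈ F.1, (A ∩ B).Nonempty

/-- Maximal linked upfamilies. -/
def Upfamily.IsMaxLinked {X : Type*} (F : Upfamily X) : Prop :=
  F.Linked ∧ ∀ G : Upfamily X, G.Linked → F.1 ⊆ G.1 → F = G

/-- Filters: upfamilies closed under binary intersections. -/
def Upfamily.IsFilter {X : Type*} (F : Upfamily X) : Prop :=
  ∀ A ∈ F.1, ∀ B ∈ F.1, A ∩ B ∈ F.1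

/-- Ultrafilters: maximal filters. -/
def Upfamily.IsUltrafilter {X : Type*} (F : Upfamily X) : Prop :=
  F.IsFilter ∧ ∀ G : Upfamily X, G.IsFilter → F.1 ⊆ G.1 → F = G

/-- The superextension `λ(X)` of maximal linked upfamilies. -/
def lambdaS (X : Type*) : Set (Upfamily X) := {F | F.IsMaxLinked}

/-- The semigroup `N₂(X)` of linked upfamilies. -/
def N2S (X : Type*) : Set (Upfamily X) := {F | F.Linked}

/-- The semigroup `φ(X)` of filters. -/
def phiS (X : Type*) : Set (Upfamily X) := {F | F.IsFilter}

/-- The Stone-Čech extension `β(X)` of ultrafilters. -/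
def betaS (X : Type*) : Set (Upfamily X) := {F | F.IsUltrafilter}

section SemigroupProps

variable {M : Type*} [Mul M]

/-- A subset closed under multiplication (i.e. a subsemigroup). -/
def mulClosed (S : Set M) : Prop := ∀ a ∈ S, ∀ b ∈ S, a * b ∈ S

/-- The operation is commutative on `S`. -/
def commOn (S : Set M) : Prop := ∀ a ∈ S, ∀ b ∈ S, a * b = b * a

/-- The idempotents of `S` commute. -/
def idemCommOn (S : Set M) : Prop :=
  ∀ a ∈ S, ∀ b ∈ S, a * a = a → b * b = b → a * b = b * a

/-- `S` is an inverse semigroup: every element has a unique inverse in `S`. -/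
def inverseOn (S : Set M) : Prop :=
  ∀ a ∈ S, ∃! b, b ∈ S ∧ a * b * a = a ∧ b * a * b = b

/-- `H` is a subgroup of the ambient multiplicative structure:
it is closed under multiplication and carries a group structure. -/
def IsSubgroupIn (H : Set M) : Prop :=
  (∀ a ∈ H, ∀ b ∈ H, a * b ∈ H) ∧
    ∃ e ∈ H, (∀ a ∈ H, e * a = a ∧ a * e = a) ∧ ∀ a ∈ H, ∃ b ∈ H, a * b = e ∧ b * a = e

/-- `S` is a Clifford semigroup: a union of groups. -/
def cliffordOn (S : Set M) : Prop := ∀ a ∈ S, ∃ H ⊆ S, IsSubgroupIn H ∧ a ∈ H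

/-- `S` is regular in `T`: every `a ∈ S` satisfies `a ∈ a T a`. -/
def regularIn (S T : Set M) : Prop := ∀ a ∈ S, ∃ b ∈ T, a * b * a = a

/-- `ppow a n = a^(n+1)`: positive powers in a semigroup. -/
def ppow (a : M) : ℕ → M
  | 0 => a
  | n + 1 => ppow a n * a

/-- `S` is sub-Clifford: `x^{n+1} = x^{m+1}` implies `x^n = x^m` for positive `n < m`. -/
def subCliffordOn (S : Set M) : Prop :=
  ∀ a ∈ S, ∀ n m : ℕ, n < m → ppow a (n + 1) = ppow a (m + 1) → ppow a n = ppow a m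

end SemigroupProps

/-- The cyclic group `Cₙ` of order `n`. -/
abbrev Cgrp (n : ℕ) : Type := Multiplicative (ZMod n)

/-- The linear semilattice `Lₙ = {0,…,n-1}` with the operation of minimum. -/
def L (n : ℕ) : Type := Fin n

instance {n : ℕ} : Mul (L n) :=
  ⟨fun a b => show Fin n from min (show Fin n from a) (show Fin n from b)⟩

/-- The disjoint ordered union `X ⊔ Y` of two semigroups, in which
`x * y = y * x = x` for `x ∈ X` and `y ∈ Y`. -/
abbrev OSum (A B : Type*) : Type _ := A ⊕ B

instance {A B : Type*} [Mul A] [Mul B] : Mul (OSum A B) :=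
  ⟨fun x y =>
    match x, y with
    | Sum.inl a, Sum.inl a' => Sum.inl (a * a')
    | Sum.inl a, Sum.inr _ => Sum.inl a
    | Sum.inr _, Sum.inl a => Sum.inl a
    | Sum.inr b, Sum.inr b' => Sum.inr (b * b')⟩

/-- `M` is isomorphic to the sub-semigroup `S` of `N`: there is an injective
operation-preserving map of `M` onto `S`. -/
def MulIsoOnto (M : Type*) [Mul M] {N : Type*} [Mul N] (S : Set N) : Prop :=
  ∃ f : M → N, Function.Injective f ∧ Set.range f = S ∧ ∀ x y : M, f (x * y) = f x * f y


/-! ### Auxiliary development -/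

section Aux

abbrev XX := Cgrp 2 × Cgrp 2

instance : Fintype (L 1) := inferInstanceAs (Fintype (Fin 1))
instance : DecidableEq (L 1) := inferInstanceAs (DecidableEq (Fin 1))

def elem (n : ℕ) : XX := (Multiplicative.ofAdd (n : ZMod 2), Multiplicative.ofAdd ((n / 2 : ℕ) : ZMod 2))
def idx (x : XX) : ℕ := (Multiplicative.toAdd x.1).val + 2 * (Multiplicative.toAdd x.2).val

theorem idx_lt : ∀ x : XX, idx x < 4 := by decide
theorem elem_idx : ∀ x : XX, elem (idx x) = x := by decide
theorem idx_elem : ∀ n < 4, idx (elem n) = n := by decide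
theorem idx_mul : ∀ x y : XX, idx (x * y) = idx x ^^^ idx y := by decide

def fourIf (b0 b1 b2 b3 : Bool) : ℕ := (cond b0 1 0) + (cond b1 2 0) + (cond b2 4 0) + (cond b3 8 0)
def mk4 (b : ℕ → Bool) : ℕ := fourIf (b 0) (b 1) (b 2) (b 3)

theorem fourIf_lt : ∀ b0 b1 b2 b3, fourIf b0 b1 b2 b3 < 16 := by decide
theorem fourIf_bit0 : ∀ b0 b1 b2 b3, (fourIf b0 b1 b2 b3).testBit 0 = b0 := by decide
theorem fourIf_bit1 : ∀ b0 b1 b2 b3, (fourIf b0 b1 b2 b3).testBit 1 = b1 := by decide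
theorem fourIf_bit2 : ∀ b0 b1 b2 b3, (fourIf b0 b1 b2 b3).testBit 2 = b2 := by decide
theorem fourIf_bit3 : ∀ b0 b1 b2 b3, (fourIf b0 b1 b2 b3).testBit 3 = b3 := by decide

theorem mk4_lt (b : ℕ → Bool) : mk4 b < 16 := fourIf_lt _ _ _ _

theorem mk4_testBit (b : ℕ → Bool) : ∀ i < 4, (mk4 b).testBit i = b i := by
  intro i hi
  interval_cases i
  · exact fourIf_bit0 _ _ _ _
  · exact fourIf_bit1 _ _ _ _
  · exact fourIf_bit2 _ _ _ _
  · exact fourIf_bit3 _ _ _ _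

def pull (i m : ℕ) : ℕ := mk4 (fun j => m.testBit (i ^^^ j))
def maskA (h u : ℕ) : ℕ := mk4 (fun a => h.testBit (pull a u))
theorem pull_lt (i m : ℕ) : pull i m < 16 := mk4_lt _
theorem maskA_lt (h u : ℕ) : maskA h u < 16 := mk4_lt _

def lookup (n : ℕ) : ℕ :=
  [60072, 60616, 63712, 65152, 64704, 64160, 61064, 59624, 43690, 52428, 61680, 65280].getD n 0

abbrev monoB (g : ℕ) : Prop := ∀ s < 16, ∀ t < 16, s &&& t = s → g.testBit s = true → g.testBit t = true
abbrev linkedB (g : ℕ) : Prop := ∀ s < 16, ∀ t < 16, g.testBit s = true → g.testBit t = true → s &&& t ≠ 0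
abbrev maxB (g : ℕ) : Prop := ∀ s < 16, g.testBit s = true ∨ g.testBit (15 ^^^ s) = true
abbrev goodB (g : ℕ) : Prop := monoB g ∧ linkedB g ∧ g.testBit 15 = true

theorem land_bits : ∀ s < 16, ∀ t < 16, (s &&& t = s ↔ ∀ i < 4, s.testBit i = true → t.testBit i = true) := by decide
theorem inter_exists : ∀ s < 16, ∀ t < 16, s &&& t ≠ 0 → ∃ i < 4, s.testBit i = true ∧ t.testBit i = true := by decide
theorem xorc : ∀ s < 16, ∀ i < 4, (15 ^^^ s).testBit i = !(s.testBit i) := by decide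
theorem xor_lt : ∀ s < 16, 15 ^^^ s < 16 := by decide
theorem xor_ne : ∀ s < 16, s ≠ 15 → 15 ^^^ s ≠ 0 := by decide
theorem mask_ne_zero : ∀ s < 16, s ≠ 0 → ∃ i < 4, s.testBit i = true := by decide
theorem bit15all : ∀ i < 4, Nat.testBit 15 i = true := by decide

theorem monoTable : ∀ n < 12, monoB (lookup n) := by decide
theorem linkedTable : ∀ n < 12, linkedB (lookup n) := by decide
theorem bit15Table : ∀ n < 12, (lookup n).testBit 15 = true := by decide
theorem maxTable : ∀ n < 12, maxB (lookup n) := by decide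
theorem goodTable : ∀ n < 12, goodB (lookup n) ∧ maxB (lookup n) :=
  fun n h => ⟨⟨monoTable n h, linkedTable n h, bit15Table n h⟩, maxTable n h⟩

def mulIdx (n m : ℕ) : ℕ :=
  (if n / 4 = 2 then m / 4 else if m / 4 = 2 then n / 4 else (n / 4 + m / 4) % 2) * 4
    + ((n % 4) ^^^ (m % 4))

set_option maxRecDepth 10000 in
theorem homTable : ∀ n < 12, ∀ m < 12, ∀ u < 16,
    (lookup n).testBit (maskA (lookup m) u) = (lookup (mulIdx n m)).testBit u := by decide

theorem lookup_inj : ∀ n < 12, ∀ m < 12, n ≠ m → ∃ s < 16, (lookup n).testBit s ≠ (lookup m).testBit s := by decide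

/-! ### Set-level families -/

def setOfMask (s : ℕ) : Set XX := {x | s.testBit (idx x) = true}

theorem elem_mem_setOfMask {s i : ℕ} (hi : i < 4) (hb : s.testBit i = true) :
    elem i ∈ setOfMask s := by
  show s.testBit (idx (elem i)) = true
  rw [idx_elem i hi]; exact hb

theorem setOfMask_subset {s : ℕ} (hs : s < 16) {A : Set XX} :
    setOfMask s ⊆ A ↔ ∀ i < 4, s.testBit i = true → elem i ∈ A := by
  constructor
  · intro h i hi hb
    exact h (elem_mem_setOfMask hi hb)
  · intro h x hx
    have := h (idx x) (idx_lt x) hx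
    rwa [elem_idx] at this

theorem setOfMask_mono {s t : ℕ} (hs : s < 16) (ht : t < 16) (h : s &&& t = s) :
    setOfMask s ⊆ setOfMask t := by
  rw [setOfMask_subset hs]
  intro i hi hb
  exact elem_mem_setOfMask hi (((land_bits s hs t ht).mp h) i hi hb)

def Fam (g : ℕ) : Set (Set XX) := {A | ∃ s, s < 16 ∧ g.testBit s = true ∧ setOfMask s ⊆ A}

open Classical in
noncomputable def maskOf (A : Set XX) : ℕ := mk4 (fun i => decide (elem i ∈ A))

theorem maskOf_lt (A : Set XX) : maskOf A < 16 := mk4_lt _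

theorem maskOf_testBit (A : Set XX) : ∀ i < 4, ((maskOf A).testBit i = true ↔ elem i ∈ A) := by
  intro i hi
  classical
  rw [maskOf, mk4_testBit _ i hi, decide_eq_true_eq]

theorem mem_maskOf {A : Set XX} {x : XX} : x ∈ A ↔ (maskOf A).testBit (idx x) = true := by
  rw [maskOf_testBit A (idx x) (idx_lt x), elem_idx]

theorem mem_Fam {g : ℕ} (hg : monoB g) {A : Set XX} :
    A ∈ Fam g ↔ g.testBit (maskOf A) = true := by
  constructor
  · rintro ⟨s, hs, hb, hsub⟩
    refine hg s hs (maskOf A) (maskOf_lt A) ?_ hb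
    rw [land_bits s hs _ (maskOf_lt A)]
    intro i hi hbi
    exact (maskOf_testBit A i hi).mpr ((setOfMask_subset hs).mp hsub i hi hbi)
  · intro hb
    exact ⟨maskOf A, maskOf_lt A, hb, fun x hx => mem_maskOf.mpr hx⟩

theorem setOfMask_mem_Fam {g : ℕ} (hg : monoB g) {s : ℕ} (hs : s < 16) :
    setOfMask s ∈ Fam g ↔ g.testBit s = true := by
  constructor
  · rintro ⟨t, ht, hb, hsub⟩
    refine hg t ht s hs ?_ hb
    rw [land_bits t ht s hs]
    intro i hi hbi
    have h2 : s.testBit (idx (elem i)) = true := (setOfMask_subset ht).mp hsub i hi hbi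
    rwa [idx_elem i hi] at h2
  · intro hb
    exact ⟨s, hs, hb, subset_rfl⟩

theorem famUp {g : ℕ} (hg : goodB g) : IsUpfamily (Fam g) := by
  refine ⟨⟨Set.univ, 15, by norm_num, hg.2.2, fun x _ => Set.mem_univ x⟩, ?_, ?_⟩
  · rintro A ⟨s, hs, hb, hsub⟩
    obtain ⟨i, hi, hbi, -⟩ := inter_exists s hs s hs (hg.2.1 s hs s hs hb hb)
    exact ⟨elem i, hsub (elem_mem_setOfMask hi hbi)⟩
  · rintro A ⟨s, hs, hb, hsub⟩ B hAB
    exact ⟨s, hs, hb, hsub.trans hAB⟩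

def mkUp (g : ℕ) (hg : goodB g) : Upfamily XX := ⟨Fam g, famUp hg⟩

theorem mkUp_linked {g : ℕ} (hg : goodB g) : (mkUp g hg).Linked := by
  rintro A ⟨s, hs, hbs, hsubs⟩ B ⟨t, ht, hbt, hsubt⟩
  obtain ⟨i, hi, h1, h2⟩ := inter_exists s hs t ht (hg.2.1 s hs t ht hbs hbt)
  exact ⟨elem i, hsubs (elem_mem_setOfMask hi h1), hsubt (elem_mem_setOfMask hi h2)⟩

theorem mkUp_max {g : ℕ} (hg : goodB g) (hm : maxB g) : (mkUp g hg).IsMaxLinked := by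
  refine ⟨mkUp_linked hg, fun G hGl hsub => ?_⟩
  apply Subtype.ext
  apply Set.Subset.antisymm hsub
  intro A hA
  by_contra hA'
  have h1 : ¬ g.testBit (maskOf A) = true := fun h => hA' ((mem_Fam hg.1).mpr h)
  have h2 := (hm (maskOf A) (maskOf_lt A)).resolve_left h1
  have h3 : setOfMask (15 ^^^ maskOf A) ∈ G.1 :=
    hsub ⟨_, xor_lt _ (maskOf_lt A), h2, subset_rfl⟩
  obtain ⟨x, hx1, hx2⟩ := hGl A hA _ h3
  have hb1 : (maskOf A).testBit (idx x) = true := mem_maskOf.mp hx1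
  have hb2 : (15 ^^^ maskOf A).testBit (idx x) = true := hx2
  rw [xorc _ (maskOf_lt A) _ (idx_lt x), hb1] at hb2
  simp at hb2

theorem Fam_subset_F (F : Upfamily XX) (g : ℕ)
    (h : ∀ s < 16, g.testBit s = true → setOfMask s ∈ F.1) : Fam g ⊆ F.1 := by
  rintro A ⟨s, hs, hb, hsub⟩
  exact F.2.2.2 _ (h s hs hb) _ hsub

theorem P_up (F : Upfamily XX) {t s : ℕ} (ht : t < 16) (hs : s < 16) (h : t &&& s = t)
    (hm : setOfMask t ∈ F.1) : setOfMask s ∈ F.1 :=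
  F.2.2.2 _ hm _ (setOfMask_mono ht hs h)

/-! ### Computation of the extended multiplication -/

theorem mem_upMul {g h : ℕ} (hg : goodB g) (hh : goodB h) {C : Set XX} :
    C ∈ upMul (Fam g) (Fam h) ↔ g.testBit (maskA h (maskOf C)) = true := by
  constructor
  · rintro ⟨A, hA, B, hBmem, hunion⟩
    obtain ⟨s, hs, hsb, hssub⟩ := hA
    refine hg.1 s hs _ (maskA_lt h (maskOf C)) ?_ hsb
    rw [land_bits s hs _ (maskA_lt h (maskOf C))]
    intro i hi hbi
    rw [maskA, mk4_testBit _ i hi]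
    have ha : elem i ∈ A := hssub (elem_mem_setOfMask hi hbi)
    obtain ⟨t, ht, htb, htsub⟩ := hBmem (elem i) ha
    refine hh.1 t ht _ (pull_lt i (maskOf C)) ?_ htb
    rw [land_bits t ht _ (pull_lt i (maskOf C))]
    intro j hj hbj
    rw [pull, mk4_testBit _ j hj]
    have hy : elem j ∈ B (elem i) := htsub (elem_mem_setOfMask hj hbj)
    have hC : elem i * elem j ∈ C := hunion (Set.mem_biUnion ha ⟨elem j, hy, rfl⟩)
    have h2 := mem_maskOf.mp hC
    rwa [idx_mul, idx_elem i hi, idx_elem j hj] at h2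
  · intro hb
    refine ⟨setOfMask (maskA h (maskOf C)), ⟨_, maskA_lt h (maskOf C), hb, subset_rfl⟩,
      fun a => {y | a * y ∈ C}, ?_, ?_⟩
    · intro a ha
      have ha' : (maskA h (maskOf C)).testBit (idx a) = true := ha
      rw [maskA, mk4_testBit _ _ (idx_lt a)] at ha'
      refine ⟨pull (idx a) (maskOf C), pull_lt _ _, ha', ?_⟩
      intro y hy
      have hy' : (pull (idx a) (maskOf C)).testBit (idx y) = true := hy
      rw [pull, mk4_testBit _ _ (idx_lt y)] at hy'
      show a * y ∈ C
      rw [mem_maskOf, idx_mul]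
      exact hy'
    · intro z hz
      simp only [Set.mem_iUnion, Set.mem_image] at hz
      obtain ⟨a, ha, y, hy, rfl⟩ := hz
      exact hy

/-! ### Maximality arguments -/

theorem maxmem (F : Upfamily XX) (hF : F.IsMaxLinked) (A : Set XX) (hne : A.Nonempty)
    (hmeet : ∀ C ∈ F.1, (A ∩ C).Nonempty) : A ∈ F.1 := by
  have hG : IsUpfamily (F.1 ∪ {B | A ⊆ B}) := by
    refine ⟨⟨A, Or.inr (subset_refl A)⟩, ?_, ?_⟩
    · rintro B (hB | hB)
      · exact F.2.2.1 B hB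
      · exact hne.mono hB
    · rintro B (hB | hB) C hBC
      · exact Or.inl (F.2.2.2 B hB C hBC)
      · exact Or.inr (Set.Subset.trans hB hBC)
  have hGl : Upfamily.Linked ⟨_, hG⟩ := by
    rintro B1 (h1 | h1) B2 (h2 | h2)
    · exact hF.1 B1 h1 B2 h2
    · obtain ⟨x, hxA, hxB⟩ := hmeet B1 h1
      exact ⟨x, hxB, h2 hxA⟩
    · obtain ⟨x, hxA, hxB⟩ := hmeet B2 h2
      exact ⟨x, h1 hxA, hxB⟩
    · obtain ⟨x, hx⟩ := hne
      exact ⟨x, h1 hx, h2 hx⟩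
  have hEq := hF.2 ⟨_, hG⟩ hGl Set.subset_union_left
  rw [hEq]
  exact Or.inr (subset_refl A)

theorem fifteen_mem (F : Upfamily XX) : setOfMask 15 ∈ F.1 := by
  obtain ⟨A, hA⟩ := F.2.1
  exact F.2.2.2 A hA _ (fun x _ => bit15all (idx x) (idx_lt x))

theorem dichoP (F : Upfamily XX) (hF : F.IsMaxLinked) :
    ∀ s < 16, setOfMask s ∈ F.1 ∨ setOfMask (15 ^^^ s) ∈ F.1 := by
  intro s hs
  by_cases h0 : setOfMask s ∈ F.1
  · exact Or.inl h0
  right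
  by_cases h15 : s = 15
  · exact absurd (h15 ▸ fifteen_mem F) h0
  apply maxmem F hF
  · obtain ⟨i, hi, hbi⟩ := mask_ne_zero _ (xor_lt s hs) (xor_ne s hs h15)
    exact ⟨elem i, elem_mem_setOfMask hi hbi⟩
  · intro C hC
    by_contra hemp
    have hsub : C ⊆ setOfMask s := by
      intro x hx
      have hx' : x ∉ setOfMask (15 ^^^ s) := fun hmem => hemp ⟨x, hmem, hx⟩
      show s.testBit (idx x) = true
      by_contra hb
      exact hx' (show (15 ^^^ s).testBit (idx x) = true by
        rw [xorc s hs _ (idx_lt x)]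
        simp only [Bool.not_eq_true] at hb
        rw [hb]
        rfl)
    exact h0 (F.2.2.2 C hC _ hsub)

/-! ### The isomorphism -/

abbrev Idx : Type := (OSum (Cgrp 2) (L 1)) × Cgrp 2 × Cgrp 2

def blkOf : OSum (Cgrp 2) (L 1) → ℕ
  | Sum.inl a => (Multiplicative.toAdd a).val
  | Sum.inr _ => 2

def code (p : Idx) : ℕ :=
  4 * blkOf p.1 + 2 * (Multiplicative.toAdd p.2.1).val + (Multiplicative.toAdd p.2.2).val

theorem code_lt : ∀ p : Idx, code p < 12 := by decide
theorem code_inj : ∀ p q : Idx, code p = code q → p = q := by decide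
theorem code_mul : ∀ p q : Idx, code (p * q) = mulIdx (code p) (code q) := by decide

def gm (p : Idx) : ℕ := lookup (code p)

theorem gm_good (p : Idx) : goodB (gm p) := (goodTable _ (code_lt p)).1
theorem gm_max (p : Idx) : maxB (gm p) := (goodTable _ (code_lt p)).2

def fmap (p : Idx) : Upfamily XX := mkUp (gm p) (gm_good p)

theorem fmap_maxlinked (p : Idx) : (fmap p).IsMaxLinked := mkUp_max (gm_good p) (gm_max p)

theorem fmap_inj : Function.Injective fmap := by
  intro p q h
  by_contra hne
  have hc : code p ≠ code q := fun hh => hne (code_inj p q hh)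
  obtain ⟨s, hs, hbits⟩ := lookup_inj (code p) (code_lt p) (code q) (code_lt q) hc
  have hfam : Fam (gm p) = Fam (gm q) := congrArg Subtype.val h
  have key : ((gm p).testBit s = true) ↔ ((gm q).testBit s = true) := by
    rw [← setOfMask_mem_Fam (gm_good p).1 hs, ← setOfMask_mem_Fam (gm_good q).1 hs, hfam]
  exact hbits (Bool.eq_iff_iff.mpr key)

theorem fmap_mul (p q : Idx) : fmap (p * q) = fmap p * fmap q := by
  apply Subtype.ext
  apply Set.ext
  intro C
  show C ∈ Fam (gm (p * q)) ↔ C ∈ upMul (Fam (gm p)) (Fam (gm q))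
  rw [mem_Fam (gm_good (p * q)).1, mem_upMul (gm_good p) (gm_good q)]
  have ht := homTable (code p) (code_lt p) (code q) (code_lt q) (maskOf C) (maskOf_lt C)
  show (lookup (code (p * q))).testBit (maskOf C) = true ↔
    (lookup (code p)).testBit (maskA (lookup (code q)) (maskOf C)) = true
  rw [code_mul p q, ht]

theorem reach (F : Upfamily XX) (hF : F.IsMaxLinked) (p : Idx)
    (hcov : ∀ s < 16, (gm p).testBit s = true → setOfMask s ∈ F.1) : fmap p = F :=
  (fmap_maxlinked p).2 F hF.1 (Fam_subset_F F _ hcov)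

/-! covering certificates for the twelve families -/

theorem cov0 : ∀ s < 16, Nat.testBit 60072 s = true →
    3 &&& s = 3 ∨ 5 &&& s = 5 ∨ 9 &&& s = 9 ∨ 14 &&& s = 14 := by decide
theorem cov1 : ∀ s < 16, Nat.testBit 60616 s = true →
    3 &&& s = 3 ∨ 6 &&& s = 6 ∨ 10 &&& s = 10 ∨ 13 &&& s = 13 := by decide
theorem cov2 : ∀ s < 16, Nat.testBit 63712 s = true →
    5 &&& s = 5 ∨ 6 &&& s = 6 ∨ 11 &&& s = 11 ∨ 12 &&& s = 12 := by decide
theorem cov3 : ∀ s < 16, Nat.testBit 65152 s = true →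
    7 &&& s = 7 ∨ 9 &&& s = 9 ∨ 10 &&& s = 10 ∨ 12 &&& s = 12 := by decide
theorem cov4 : ∀ s < 16, Nat.testBit 64704 s = true →
    6 &&& s = 6 ∨ 10 &&& s = 10 ∨ 12 &&& s = 12 := by decide
theorem cov5 : ∀ s < 16, Nat.testBit 64160 s = true →
    5 &&& s = 5 ∨ 9 &&& s = 9 ∨ 12 &&& s = 12 := by decide
theorem cov6 : ∀ s < 16, Nat.testBit 61064 s = true →
    3 &&& s = 3 ∨ 9 &&& s = 9 ∨ 10 &&& s = 10 := by decide
theorem cov7 : ∀ s < 16, Nat.testBit 59624 s = true →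
    3 &&& s = 3 ∨ 5 &&& s = 5 ∨ 6 &&& s = 6 := by decide
theorem cov8 : ∀ s < 16, Nat.testBit 43690 s = true → 1 &&& s = 1 := by decide
theorem cov9 : ∀ s < 16, Nat.testBit 52428 s = true → 2 &&& s = 2 := by decide
theorem cov10 : ∀ s < 16, Nat.testBit 61680 s = true → 4 &&& s = 4 := by decide
theorem cov11 : ∀ s < 16, Nat.testBit 65280 s = true → 8 &&& s = 8 := by decide

def oz : Cgrp 2 := Multiplicative.ofAdd (0 : ZMod 2)
def oo : Cgrp 2 := Multiplicative.ofAdd (1 : ZMod 2)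
def lz : L 1 := ⟨0, Nat.one_pos⟩

theorem fmap_range : Set.range fmap = lambdaS (Cgrp 2 × Cgrp 2) := by
  apply Set.ext
  intro F
  constructor
  · rintro ⟨p, rfl⟩
    exact fmap_maxlinked p
  · intro hF
    have dich := dichoP F hF
    by_cases h1 : setOfMask 1 ∈ F.1
    · refine ⟨(Sum.inr lz, oz, oz), reach F hF _ ?_⟩
      intro s hs hb
      rw [show gm (Sum.inr lz, oz, oz) = 43690 from by decide] at hb
      exact P_up F (by norm_num) hs (cov8 s hs hb) h1
    by_cases h2 : setOfMask 2 ∈ F.1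
    · refine ⟨(Sum.inr lz, oz, oo), reach F hF _ ?_⟩
      intro s hs hb
      rw [show gm (Sum.inr lz, oz, oo) = 52428 from by decide] at hb
      exact P_up F (by norm_num) hs (cov9 s hs hb) h2
    by_cases h4 : setOfMask 4 ∈ F.1
    · refine ⟨(Sum.inr lz, oo, oz), reach F hF _ ?_⟩
      intro s hs hb
      rw [show gm (Sum.inr lz, oo, oz) = 61680 from by decide] at hb
      exact P_up F (by norm_num) hs (cov10 s hs hb) h4
    by_cases h8 : setOfMask 8 ∈ F.1
    · refine ⟨(Sum.inr lz, oo, oo), reach F hF _ ?_⟩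
      intro s hs hb
      rw [show gm (Sum.inr lz, oo, oo) = 65280 from by decide] at hb
      exact P_up F (by norm_num) hs (cov11 s hs hb) h8
    have h14 : setOfMask 14 ∈ F.1 := by
      have := (dich 1 (by norm_num)).resolve_left h1
      rwa [show (15 : ℕ) ^^^ 1 = 14 from by decide] at this
    have h13 : setOfMask 13 ∈ F.1 := by
      have := (dich 2 (by norm_num)).resolve_left h2
      rwa [show (15 : ℕ) ^^^ 2 = 13 from by decide] at this
    have h11 : setOfMask 11 ∈ F.1 := by
      have := (dich 4 (by norm_num)).resolve_left h4
      rwa [show (15 : ℕ) ^^^ 4 = 11 from by decide] at this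
    have h7 : setOfMask 7 ∈ F.1 := by
      have := (dich 8 (by norm_num)).resolve_left h8
      rwa [show (15 : ℕ) ^^^ 8 = 7 from by decide] at this
    by_cases h3 : setOfMask 3 ∈ F.1
    · by_cases h5 : setOfMask 5 ∈ F.1
      · by_cases h9 : setOfMask 9 ∈ F.1
        · -- center 0
          refine ⟨(Sum.inl oz, oz, oz), reach F hF _ ?_⟩
          intro s hs hb
          rw [show gm (Sum.inl oz, oz, oz) = 60072 from by decide] at hb
          rcases cov0 s hs hb with h | h | h | h
          · exact P_up F (by norm_num) hs h h3
          · exact P_up F (by norm_num) hs h h5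
          · exact P_up F (by norm_num) hs h h9
          · exact P_up F (by norm_num) hs h h14
        · -- triangle {0,1,2}
          have h6 : setOfMask 6 ∈ F.1 := by
            have := (dich 9 (by norm_num)).resolve_left h9
            rwa [show (15 : ℕ) ^^^ 9 = 6 from by decide] at this
          refine ⟨(Sum.inl oo, oo, oo), reach F hF _ ?_⟩
          intro s hs hb
          rw [show gm (Sum.inl oo, oo, oo) = 59624 from by decide] at hb
          rcases cov7 s hs hb with h | h | h
          · exact P_up F (by norm_num) hs h h3
          · exact P_up F (by norm_num) hs h h5
          · exact P_up F (by norm_num) hs h h6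
      · have h10 : setOfMask 10 ∈ F.1 := by
          have := (dich 5 (by norm_num)).resolve_left h5
          rwa [show (15 : ℕ) ^^^ 5 = 10 from by decide] at this
        by_cases h9 : setOfMask 9 ∈ F.1
        · -- triangle {0,1,3}
          refine ⟨(Sum.inl oo, oo, oz), reach F hF _ ?_⟩
          intro s hs hb
          rw [show gm (Sum.inl oo, oo, oz) = 61064 from by decide] at hb
          rcases cov6 s hs hb with h | h | h
          · exact P_up F (by norm_num) hs h h3
          · exact P_up F (by norm_num) hs h h9
          · exact P_up F (by norm_num) hs h h10
        · -- center 1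
          have h6 : setOfMask 6 ∈ F.1 := by
            have := (dich 9 (by norm_num)).resolve_left h9
            rwa [show (15 : ℕ) ^^^ 9 = 6 from by decide] at this
          refine ⟨(Sum.inl oz, oz, oo), reach F hF _ ?_⟩
          intro s hs hb
          rw [show gm (Sum.inl oz, oz, oo) = 60616 from by decide] at hb
          rcases cov1 s hs hb with h | h | h | h
          · exact P_up F (by norm_num) hs h h3
          · exact P_up F (by norm_num) hs h h6
          · exact P_up F (by norm_num) hs h h10
          · exact P_up F (by norm_num) hs h h13
    · have h12 : setOfMask 12 ∈ F.1 := by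
        have := (dich 3 (by norm_num)).resolve_left h3
        rwa [show (15 : ℕ) ^^^ 3 = 12 from by decide] at this
      by_cases h5 : setOfMask 5 ∈ F.1
      · by_cases h9 : setOfMask 9 ∈ F.1
        · -- triangle {0,2,3}
          refine ⟨(Sum.inl oo, oz, oo), reach F hF _ ?_⟩
          intro s hs hb
          rw [show gm (Sum.inl oo, oz, oo) = 64160 from by decide] at hb
          rcases cov5 s hs hb with h | h | h
          · exact P_up F (by norm_num) hs h h5
          · exact P_up F (by norm_num) hs h h9
          · exact P_up F (by norm_num) hs h h12
        · -- center 2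
          have h6 : setOfMask 6 ∈ F.1 := by
            have := (dich 9 (by norm_num)).resolve_left h9
            rwa [show (15 : ℕ) ^^^ 9 = 6 from by decide] at this
          refine ⟨(Sum.inl oz, oo, oz), reach F hF _ ?_⟩
          intro s hs hb
          rw [show gm (Sum.inl oz, oo, oz) = 63712 from by decide] at hb
          rcases cov2 s hs hb with h | h | h | h
          · exact P_up F (by norm_num) hs h h5
          · exact P_up F (by norm_num) hs h h6
          · exact P_up F (by norm_num) hs h h11
          · exact P_up F (by norm_num) hs h h12
      · have h10 : setOfMask 10 ∈ F.1 := by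
          have := (dich 5 (by norm_num)).resolve_left h5
          rwa [show (15 : ℕ) ^^^ 5 = 10 from by decide] at this
        by_cases h9 : setOfMask 9 ∈ F.1
        · -- center 3
          refine ⟨(Sum.inl oz, oo, oo), reach F hF _ ?_⟩
          intro s hs hb
          rw [show gm (Sum.inl oz, oo, oo) = 65152 from by decide] at hb
          rcases cov3 s hs hb with h | h | h | h
          · exact P_up F (by norm_num) hs h h7
          · exact P_up F (by norm_num) hs h h9
          · exact P_up F (by norm_num) hs h h10
          · exact P_up F (by norm_num) hs h h12
        · -- triangle {1,2,3}
          have h6 : setOfMask 6 ∈ F.1 := by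
            have := (dich 9 (by norm_num)).resolve_left h9
            rwa [show (15 : ℕ) ^^^ 9 = 6 from by decide] at this
          refine ⟨(Sum.inl oo, oz, oz), reach F hF _ ?_⟩
          intro s hs hb
          rw [show gm (Sum.inl oo, oz, oz) = 64704 from by decide] at hb
          rcases cov4 s hs hb with h | h | h
          · exact P_up F (by norm_num) hs h h6
          · exact P_up F (by norm_num) hs h h10
          · exact P_up F (by norm_num) hs h h12

end Aux

/-- Proposition 4.1(4): `λ(C₂ × C₂) ≅ (C₂ ⊔ L₁) × C₂ × C₂`. -/
theorem superextension_C2xC2 :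
    MulIsoOnto ((OSum (Cgrp 2) (L 1)) × Cgrp 2 × Cgrp 2) (lambdaS (Cgrp 2 × Cgrp 2)) := by
  exact ⟨fmap, fmap_inj, fmap_range, fun x y => fmap_mul x y⟩
end

section
/- The superextension λ(L₁⊔C₂) of the semigroup L₁⊔C₂ is isomorphic to the semigroup L₁⊔L₁⊔C₂. -/
open Set

namespace SuperextHelper

abbrev XX := OSum (L 1) (Cgrp 2)

instance : DecidableEq (L 1) := inferInstanceAs (DecidableEq (Fin 1))
instance : Fintype (L 1) := inferInstanceAs (Fintype (Fin 1))
instance : Subsingleton (L 1) := inferInstanceAs (Subsingleton (Fin 1))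

def z : XX := Sum.inl (⟨0, Nat.one_pos⟩ : Fin 1)

/- decidable facts about the 3-element semigroup XX -/
lemma four_pigeon : ∀ x y u v : XX, x = y ∨ u = v ∨ x = u ∨ x = v ∨ y = u ∨ y = v := by decide
lemma compl_two : ∀ x : XX, ∃ u v : XX, u ≠ v ∧ u ≠ x ∧ v ≠ x := by decide
lemma inr_mul_inj : ∀ (g : Cgrp 2) (x y : XX), Sum.inr g * x = Sum.inr g * y → x = y := by decide
lemma inr_mul_surj : ∀ (g : Cgrp 2) (x : XX), ∃ y, Sum.inr g * y = x := by decide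
lemma mul_inr_inj : ∀ (g : Cgrp 2) (x y : XX), x * Sum.inr g = y * Sum.inr g → x = y := by decide
lemma mul_inr_surj : ∀ (g : Cgrp 2) (x : XX), ∃ y, y * Sum.inr g = x := by decide
lemma ne_has_inr : ∀ u v : XX, u ≠ v → (∃ g, u = Sum.inr g) ∨ (∃ g, v = Sum.inr g) := by decide
lemma z_zero : ∀ w : XX, w * z = z ∧ z * w = z := by decide
lemma two_inr : ∃ g h : Cgrp 2, (Sum.inr g : XX) ≠ Sum.inr h := by decide

/- general lemmas about principal upfamilies -/
lemma principal_linked {Y : Type*} (x : Y) : (Upfamily.principal x).Linked :=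
  fun A hA B hB => ⟨x, hA, hB⟩

lemma principal_maxLinked {Y : Type*} (x : Y) : (Upfamily.principal x).IsMaxLinked := by
  refine ⟨principal_linked x, fun G hG hsub => ?_⟩
  apply Subtype.ext
  apply Set.Subset.antisymm hsub
  intro A hA
  obtain ⟨y, hy1, hy2⟩ := hG A hA {x} (hsub (show x ∈ ({x} : Set Y) from rfl))
  have : y = x := hy2
  show x ∈ A
  rw [← this]; exact hy1

lemma principal_injective {Y : Type*} :
    Function.Injective (Upfamily.principal : Y → Upfamily Y) := by
  intro x y h
  have h1 : ({y} : Set Y) ∈ (Upfamily.principal y).1 := rfl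
  rw [← h] at h1
  exact h1

lemma principal_mul_principal {Y : Type*} [Mul Y] (x y : Y) :
    Upfamily.principal x * Upfamily.principal y = Upfamily.principal (x * y) := by
  apply Subtype.ext
  ext C
  constructor
  · rintro ⟨A, hA, B, hB, hsub⟩
    exact hsub (Set.mem_biUnion hA ⟨y, hB x hA, rfl⟩)
  · intro hC
    refine ⟨{x}, rfl, fun _ => {y}, fun a _ => rfl, ?_⟩
    intro w hw
    simp only [Set.mem_iUnion, Set.mem_image, Set.mem_singleton_iff] at hw
    obtain ⟨a, ha, u, hu, huw⟩ := hw
    rw [← huw, ha, hu]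
    exact hC

lemma principal_zero_mul {Y : Type*} [Mul Y] {c : Y} (h : ∀ w, c * w = c) (F : Upfamily Y) :
    Upfamily.principal c * F = Upfamily.principal c := by
  apply Subtype.ext
  ext C
  constructor
  · rintro ⟨A, hA, B, hB, hsub⟩
    obtain ⟨b, hb⟩ := F.2.2.1 _ (hB c hA)
    exact hsub (Set.mem_biUnion hA ⟨b, hb, h b⟩)
  · intro hC
    obtain ⟨A0, hA0⟩ := F.2.1
    refine ⟨{c}, rfl, fun _ => A0, fun a _ => hA0, ?_⟩
    intro w hw
    simp only [Set.mem_iUnion, Set.mem_image, Set.mem_singleton_iff] at hw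
    obtain ⟨a, ha, u, hu, huw⟩ := hw
    rw [← huw, ha, h u]
    exact hC

lemma mul_principal_zero {Y : Type*} [Mul Y] {c : Y} (h : ∀ w, w * c = c) (F : Upfamily Y) :
    F * Upfamily.principal c = Upfamily.principal c := by
  apply Subtype.ext
  ext C
  constructor
  · rintro ⟨A, hA, B, hB, hsub⟩
    obtain ⟨a, ha⟩ := F.2.2.1 A hA
    exact hsub (Set.mem_biUnion ha ⟨c, hB a ha, h a⟩)
  · intro hC
    obtain ⟨A0, hA0⟩ := F.2.1
    refine ⟨A0, hA0, fun _ => {c}, fun a _ => rfl, ?_⟩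
    intro w hw
    simp only [Set.mem_iUnion, Set.mem_image, Set.mem_singleton_iff] at hw
    obtain ⟨a, ha, u, hu, huw⟩ := hw
    rw [← huw, hu, h a]
    exact hC

/- the triangle Δ -/
def Delta : Upfamily XX := by
  refine ⟨{A | ∃ x ∈ A, ∃ y ∈ A, x ≠ y}, ⟨Set.univ, ?_⟩, ?_, ?_⟩
  · obtain ⟨g, h, hgh⟩ := two_inr
    exact ⟨Sum.inr g, trivial, Sum.inr h, trivial, hgh⟩
  · rintro A ⟨x, hx, -⟩
    exact ⟨x, hx⟩
  · rintro A ⟨x, hx, y, hy, hxy⟩ B hAB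
    exact ⟨x, hAB hx, y, hAB hy, hxy⟩

lemma mem_Delta {A : Set XX} : A ∈ Delta.1 ↔ ∃ x ∈ A, ∃ y ∈ A, x ≠ y := Iff.rfl

lemma Delta_linked : Delta.Linked := by
  rintro A ⟨x, hx, y, hy, hxy⟩ B ⟨u, hu, v, hv, huv⟩
  rcases four_pigeon x y u v with h | h | h | h | h | h
  · exact absurd h hxy
  · exact absurd h huv
  · exact ⟨x, hx, by rw [h]; exact hu⟩
  · exact ⟨x, hx, by rw [h]; exact hv⟩
  · exact ⟨y, hy, by rw [h]; exact hu⟩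
  · exact ⟨y, hy, by rw [h]; exact hv⟩

lemma Delta_maxLinked : Delta.IsMaxLinked := by
  refine ⟨Delta_linked, fun G hG hsub => ?_⟩
  apply Subtype.ext
  refine Set.Subset.antisymm hsub fun A hA => ?_
  by_contra hnA
  obtain ⟨x, hx⟩ := G.2.2.1 A hA
  have hsing : ∀ w ∈ A, w = x := by
    intro w hw
    by_contra hne
    exact hnA ⟨w, hw, x, hx, hne⟩
  obtain ⟨u, v, huv, hux, hvx⟩ := compl_two x
  have h2 : ({u, v} : Set XX) ∈ G.1 :=
    hsub ⟨u, Set.mem_insert u {v}, v, Set.mem_insert_of_mem u rfl, huv⟩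
  obtain ⟨w, hwA, hw2⟩ := hG A hA _ h2
  have hwx := hsing w hwA
  rcases hw2 with h | h
  · exact hux (by rw [← h, hwx])
  · exact hvx (by rw [← (show w = v from h), hwx])

lemma principal_ne_Delta (x : XX) : Upfamily.principal x ≠ Delta := by
  intro h
  have h1 : ({x} : Set XX) ∈ (Upfamily.principal x).1 := rfl
  rw [h] at h1
  obtain ⟨u, hu, v, hv, huv⟩ := h1
  exact huv ((show u = x from hu).trans (show v = x from hv).symm)

lemma maxLinked_cases {F : Upfamily XX} (hF : F.IsMaxLinked) :
    (∃ x : XX, F = Upfamily.principal x) ∨ F = Delta := by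
  by_cases hs : ∃ x : XX, {x} ∈ F.1
  · obtain ⟨x, hx⟩ := hs
    refine Or.inl ⟨x, hF.2 _ (principal_linked x) ?_⟩
    intro A hA
    obtain ⟨w, hwA, hwx⟩ := hF.1 A hA {x} hx
    show x ∈ A
    rw [← (show w = x from hwx)]
    exact hwA
  · refine Or.inr (hF.2 _ Delta_linked ?_)
    intro A hA
    obtain ⟨x, hx⟩ := F.2.2.1 A hA
    by_contra hnA
    apply hs
    refine ⟨x, ?_⟩
    have hAx : A = {x} := by
      apply Set.eq_singleton_iff_unique_mem.mpr
      refine ⟨hx, fun w hw => ?_⟩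
      by_contra hne
      exact hnA ⟨w, hw, x, hx, hne⟩
    rw [← hAx]
    exact hA

/- products with Δ -/
lemma biUnion_image_preimage_subset {Y : Type*} [Mul Y] (A C : Set Y) :
    (⋃ a ∈ A, (fun y => a * y) '' ((fun y => a * y) ⁻¹' C)) ⊆ C := by
  intro w hw
  simp only [Set.mem_iUnion, Set.mem_image, Set.mem_preimage] at hw
  obtain ⟨a, _, u, hu, huw⟩ := hw
  rw [← huw]
  exact hu

lemma preimage_mem_Delta {C : Set XX} (hC : C ∈ Delta.1) (g : Cgrp 2) :
    ((fun w => (Sum.inr g : XX) * w) ⁻¹' C) ∈ Delta.1 := by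
  obtain ⟨x, hx, y, hy, hxy⟩ := hC
  obtain ⟨x', hx'⟩ := inr_mul_surj g x
  obtain ⟨y', hy'⟩ := inr_mul_surj g y
  refine ⟨x', ?_, y', ?_, ?_⟩
  · show (Sum.inr g : XX) * x' ∈ C
    rw [hx']; exact hx
  · show (Sum.inr g : XX) * y' ∈ C
    rw [hy']; exact hy
  · intro h
    exact hxy (by rw [← hx', ← hy', h])

lemma principal_inr_mul_Delta (g : Cgrp 2) :
    Upfamily.principal (Sum.inr g : XX) * Delta = Delta := by
  apply Subtype.ext
  ext C
  constructor
  · rintro ⟨A, hA, B, hB, hsub⟩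
    obtain ⟨x, hx, y, hy, hxy⟩ := hB _ hA
    refine ⟨_, hsub (Set.mem_biUnion hA ⟨x, hx, rfl⟩),
            _, hsub (Set.mem_biUnion hA ⟨y, hy, rfl⟩), ?_⟩
    intro h
    exact hxy (inr_mul_inj g x y h)
  · intro hC
    refine ⟨{Sum.inr g}, rfl, fun a => (fun w => a * w) ⁻¹' C, ?_,
            biUnion_image_preimage_subset _ _⟩
    intro a ha
    rw [Set.mem_singleton_iff] at ha
    subst ha
    exact preimage_mem_Delta hC g

lemma Delta_mul_principal_inr (g : Cgrp 2) :
    Delta * Upfamily.principal (Sum.inr g : XX) = Delta := by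
  apply Subtype.ext
  ext C
  constructor
  · rintro ⟨A, hA, B, hB, hsub⟩
    obtain ⟨u, hu, v, hv, huv⟩ := hA
    refine ⟨u * Sum.inr g, hsub (Set.mem_biUnion hu ⟨Sum.inr g, hB u hu, rfl⟩),
            v * Sum.inr g, hsub (Set.mem_biUnion hv ⟨Sum.inr g, hB v hv, rfl⟩), ?_⟩
    intro h
    exact huv (mul_inr_inj g u v h)
  · rintro ⟨x, hx, y, hy, hxy⟩
    obtain ⟨u, hu⟩ := mul_inr_surj g x
    obtain ⟨v, hv⟩ := mul_inr_surj g y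
    have huv : u ≠ v := by
      intro h
      exact hxy (by rw [← hu, ← hv, h])
    refine ⟨{u, v}, ⟨u, Set.mem_insert u {v}, v, Set.mem_insert_of_mem u rfl, huv⟩,
            fun a => (fun w => a * w) ⁻¹' C, ?_, biUnion_image_preimage_subset _ _⟩
    intro a ha
    rcases ha with h | h
    · show a * Sum.inr g ∈ C
      rw [(show a = u from h), hu]; exact hx
    · show a * Sum.inr g ∈ C
      rw [(show a = v from h), hv]; exact hy

lemma Delta_mul_Delta : Delta * Delta = Delta := by
  apply Subtype.ext
  ext C
  constructor
  · rintro ⟨A, hA, B, hB, hsub⟩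
    obtain ⟨u, hu, v, hv, huv⟩ := hA
    rcases ne_has_inr u v huv with ⟨g, hg⟩ | ⟨g, hg⟩
    · obtain ⟨x, hx, y, hy, hxy⟩ := hB u hu
      refine ⟨u * x, hsub (Set.mem_biUnion hu ⟨x, hx, rfl⟩),
              u * y, hsub (Set.mem_biUnion hu ⟨y, hy, rfl⟩), ?_⟩
      intro h
      rw [hg] at h
      exact hxy (inr_mul_inj g x y h)
    · obtain ⟨x, hx, y, hy, hxy⟩ := hB v hv
      refine ⟨v * x, hsub (Set.mem_biUnion hv ⟨x, hx, rfl⟩),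
              v * y, hsub (Set.mem_biUnion hv ⟨y, hy, rfl⟩), ?_⟩
      intro h
      rw [hg] at h
      exact hxy (inr_mul_inj g x y h)
  · intro hC
    obtain ⟨g, h, hgh⟩ := two_inr
    refine ⟨{Sum.inr g, Sum.inr h},
            ⟨Sum.inr g, Set.mem_insert _ _, Sum.inr h, Set.mem_insert_of_mem _ rfl, hgh⟩,
            fun a => (fun w => a * w) ⁻¹' C, ?_, biUnion_image_preimage_subset _ _⟩
    intro a ha
    rcases ha with h1 | h1
    · rw [(show a = Sum.inr g from h1)]
      exact preimage_mem_Delta hC g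
    · rw [(show a = Sum.inr h from h1)]
      exact preimage_mem_Delta hC h

/- the isomorphism -/
def f : OSum (L 1) (OSum (L 1) (Cgrp 2)) → Upfamily XX
  | Sum.inl _ => Upfamily.principal z
  | Sum.inr (Sum.inl _) => Delta
  | Sum.inr (Sum.inr g) => Upfamily.principal (Sum.inr g)

lemma f_injective : Function.Injective f := by
  rintro (a | b | g) (a' | b' | g') h
  · exact congrArg Sum.inl (Subsingleton.elim a a')
  · exact absurd h (principal_ne_Delta z)
  · exact absurd (principal_injective (show Upfamily.principal z = Upfamily.principal (Sum.inr g' : XX) from h)) Sum.inl_ne_inr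
  · exact absurd h.symm (principal_ne_Delta z)
  · exact congrArg (fun t => Sum.inr (Sum.inl t)) (Subsingleton.elim b b')
  · exact absurd h.symm (principal_ne_Delta _)
  · exact absurd (principal_injective (show Upfamily.principal (Sum.inr g : XX) = Upfamily.principal z from h)) Sum.inr_ne_inl
  · exact absurd h (principal_ne_Delta _)
  · exact congrArg (fun t => Sum.inr (Sum.inr t)) (Sum.inr.inj (principal_injective h))

lemma f_range : Set.range f = lambdaS XX := by
  apply Set.Subset.antisymm
  · rintro _ ⟨w, rfl⟩
    rcases w with a | b | g
    · exact principal_maxLinked z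
    · exact Delta_maxLinked
    · exact principal_maxLinked _
  · intro F hF
    rcases maxLinked_cases hF with ⟨x, rfl⟩ | rfl
    · rcases x with a | g
      · refine ⟨Sum.inl a, ?_⟩
        show Upfamily.principal z = Upfamily.principal (Sum.inl a)
        exact congrArg Upfamily.principal (congrArg Sum.inl (Subsingleton.elim _ a))
      · exact ⟨Sum.inr (Sum.inr g), rfl⟩
    · exact ⟨Sum.inr (Sum.inl ⟨0, Nat.one_pos⟩), rfl⟩

lemma f_mul : ∀ w w', f (w * w') = f w * f w' := by
  have hz : ∀ F : Upfamily XX, Upfamily.principal z * F = Upfamily.principal z :=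
    principal_zero_mul (fun w => (z_zero w).2)
  have hz' : ∀ F : Upfamily XX, F * Upfamily.principal z = Upfamily.principal z :=
    mul_principal_zero (fun w => (z_zero w).1)
  rintro (a | b | g) (a' | b' | g')
  · exact (hz _).symm
  · exact (hz _).symm
  · exact (hz _).symm
  · exact (hz' _).symm
  · exact Delta_mul_Delta.symm
  · exact (Delta_mul_principal_inr g').symm
  · exact (hz' _).symm
  · exact (principal_inr_mul_Delta g).symm
  · exact (principal_mul_principal (Sum.inr g : XX) (Sum.inr g')).symm

end SuperextHelper

/-- Proposition 4.1(5): `λ(L₁ ⊔ C₂) ≅ L₁ ⊔ L₁ ⊔ C₂`. -/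
theorem superextension_L1C2 :
    MulIsoOnto (OSum (L 1) (OSum (L 1) (Cgrp 2))) (lambdaS (OSum (L 1) (Cgrp 2))) :=
  ⟨SuperextHelper.f, SuperextHelper.f_injective, SuperextHelper.f_range, SuperextHelper.f_mul⟩
end

section
/- For every n ∈ ℕ the semigroup υ(Lₙ) is a finite semilattice; consequently the semigroups λ(Lₙ), φ(Lₙ), and N₂(Lₙ) are also finite semilattices. -/
open Set

/-- `S` is a finite semilattice: finite, commutative and idempotent. -/
def finiteSemilatticeOn {M : Type*} [Mul M] (S : Set M) : Prop :=
  S.Finite ∧ commOn S ∧ ∀ a ∈ S, a * a = a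

section Aux

instance {n : ℕ} : LinearOrder (L n) := inferInstanceAs (LinearOrder (Fin n))
instance {n : ℕ} : Finite (L n) := inferInstanceAs (Finite (Fin n))
instance {n : ℕ} : Finite (Upfamily (L n)) := by unfold Upfamily; infer_instance

lemma L.mul_def {n : ℕ} (a b : L n) : a * b = min a b := rfl

lemma L.mul_cases {n : ℕ} (a b : L n) : a * b = a ∨ a * b = b := by
  rw [L.mul_def]
  rcases min_cases a b with h | h
  · exact Or.inl h.1
  · exact Or.inr h.1

lemma mem_upMul_iff {X : Type*} [Mul X] {F G : Set (Set X)}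
    (hF : IsUpfamily F) (hG : IsUpfamily G) (C : Set X) :
    C ∈ upMul F G ↔ {a | {b | a * b ∈ C} ∈ G} ∈ F := by
  constructor
  · rintro ⟨A, hA, B, hB, hsub⟩
    refine hF.2.2 A hA _ (fun a ha => ?_)
    exact hG.2.2 (B a) (hB a ha) _ (fun b hb => hsub (mem_biUnion ha ⟨b, hb, rfl⟩))
  · intro h
    refine ⟨_, h, fun a => {b | a * b ∈ C}, fun a ha => ha, ?_⟩
    rintro x hx
    simp only [mem_iUnion, mem_image] at hx
    obtain ⟨a, _, b, hb, rfl⟩ := hx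
    exact hb

lemma upMul_comm_subset {n : ℕ} (F G : Upfamily (L n)) :
    upMul F.1 G.1 ⊆ upMul G.1 F.1 := by
  intro C hC
  rw [mem_upMul_iff F.2 G.2] at hC
  rw [mem_upMul_iff G.2 F.2]
  set A : Set (L n) := {a | {b | a * b ∈ C} ∈ G.1} with hAdef
  by_cases hAC : ∃ a ∈ A, a ∉ C
  · obtain ⟨a₀, ha₀, ha₀C⟩ := hAC
    obtain ⟨a₂, ha₂, hmin⟩ :=
      Set.exists_min_image (A \ C) id ((A \ C).toFinite) ⟨a₀, ha₀, ha₀C⟩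
    refine G.2.2.2 _ ha₂.1 _ (fun b hb => ?_)
    have hb2 : a₂ * b ∈ C := hb
    rw [L.mul_def] at hb2
    have hb' : b ∈ C ∧ b ≤ a₂ := by
      rcases min_cases a₂ b with h | h
      · rw [h.1] at hb2; exact absurd hb2 ha₂.2
      · rw [h.1] at hb2; exact ⟨hb2, h.2.le⟩
    refine F.2.2.2 A hC _ (fun a ha => ?_)
    show b * a ∈ C
    rcases le_total b a with h | h
    · rw [L.mul_def, min_eq_left h]; exact hb'.1
    · rw [L.mul_def, min_eq_right h]
      by_cases haC : a ∈ C
      · exact haC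
      · exfalso
        have h1 : a₂ ≤ a := hmin a ⟨ha, haC⟩
        have : a₂ = b := le_antisymm (h1.trans h) hb'.2
        exact ha₂.2 (this ▸ hb'.1)
  · push_neg at hAC
    obtain ⟨a₁, ha₁, hmax⟩ :=
      Set.exists_max_image A id A.toFinite (F.2.2.1 A hC)
    refine G.2.2.2 _ ha₁ _ (fun b hb => ?_)
    have hb2 : a₁ * b ∈ C := hb
    refine F.2.2.2 A hC _ (fun a ha => ?_)
    show b * a ∈ C
    rcases le_total a b with h | h
    · rw [L.mul_def, min_eq_right h]
      exact hAC a ha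
    · rw [L.mul_def, min_eq_left h]
      have hba : b ≤ a₁ := h.trans (hmax a ha)
      rwa [L.mul_def, min_eq_right hba] at hb2

lemma upMul_self {n : ℕ} (F : Upfamily (L n)) : upMul F.1 F.1 = F.1 := by
  ext C
  rw [mem_upMul_iff F.2 F.2]
  constructor
  · intro h
    by_cases hAC : ∃ a ∈ ({a | {b | a * b ∈ C} ∈ F.1} : Set (L n)), a ∉ C
    · obtain ⟨a, ha, haC⟩ := hAC
      refine F.2.2.2 _ ha _ (fun b hb => ?_)
      have hb2 : a * b ∈ C := hb
      rcases L.mul_cases a b with h' | h'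
      · rw [h'] at hb2; exact absurd hb2 haC
      · rwa [h'] at hb2
    · push_neg at hAC
      exact F.2.2.2 _ h _ hAC
  · intro hC
    refine F.2.2.2 C hC _ (fun a ha => F.2.2.2 C hC _ (fun b hb => ?_))
    show a * b ∈ C
    rcases L.mul_cases a b with h | h <;> rw [h] <;> assumption

lemma upfamily_mul_comm {n : ℕ} (F G : Upfamily (L n)) : F * G = G * F :=
  Subtype.ext (subset_antisymm (upMul_comm_subset F G) (upMul_comm_subset G F))

lemma upfamily_mul_self {n : ℕ} (F : Upfamily (L n)) : F * F = F :=
  Subtype.ext (upMul_self F)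

end Aux

/-- Proposition 4.2: for every `n ∈ ℕ` the semigroup `υ(Lₙ)` is a finite semilattice;
consequently the semigroups `λ(Lₙ)`, `φ(Lₙ)`, `N₂(Lₙ)` are also finite semilattices. -/
theorem upfamilies_of_Ln_finite_semilattice (n : ℕ) :
    finiteSemilatticeOn (univ : Set (Upfamily (L n))) ∧
      finiteSemilatticeOn (lambdaS (L n)) ∧
      finiteSemilatticeOn (phiS (L n)) ∧
      finiteSemilatticeOn (N2S (L n)) := by
  have hfin : (univ : Set (Upfamily (L n))).Finite := Set.finite_univ
  refine ⟨⟨hfin, ?_, ?_⟩, ⟨hfin.subset (subset_univ _), ?_, ?_⟩,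
    ⟨hfin.subset (subset_univ _), ?_, ?_⟩, ⟨hfin.subset (subset_univ _), ?_, ?_⟩⟩ <;>
    first
      | exact fun a _ b _ => upfamily_mul_comm a b
      | exact fun a _ => upfamily_mul_self a
end

section
/- For every n ≥ 1 and the semigroup X = C₂⊔Lₙ, the superextension λ(X) is a finite commutative Boolean semigroup whose set of idempotents coincides with λ(X)∖{⟨a⟩}, where a is the unique generator of the subgroup C₂ of X; moreover, 𝓔*⟨a⟩ = ⟨a⟩ for every idempotent 𝓔 of λ(X). -/
open Set

/-! ### Auxiliary material -/

section AuxGeneral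

variable {Y : Type*}

lemma mem_mul_iff' [Mul Y] (F G : Upfamily Y) (C : Set Y) :
    C ∈ (F * G).1 ↔ {x | (fun y => x * y) ⁻¹' C ∈ G.1} ∈ F.1 := by
  constructor
  · rintro ⟨A, hA, B, hB, hsub⟩
    refine F.2.2.2 A hA _ fun x hx => ?_
    refine G.2.2.2 (B x) (hB x hx) _ fun y hy => ?_
    exact hsub (Set.mem_biUnion hx ⟨y, hy, rfl⟩)
  · intro h
    exact ⟨_, h, fun x => (fun y => x * y) ⁻¹' C, fun x hx => hx,
      Set.iUnion₂_subset fun x _ => Set.image_preimage_subset _ _⟩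

lemma maxlinked_mem_of_forall {F : Upfamily Y} (hF : F.IsMaxLinked) {A : Set Y}
    (h : ∀ B ∈ F.1, (A ∩ B).Nonempty) : A ∈ F.1 := by
  obtain ⟨B₀, hB₀⟩ := F.2.1
  have hAne : A.Nonempty := (h B₀ hB₀).mono inter_subset_left
  have hGup : IsUpfamily (F.1 ∪ {B | A ⊆ B}) := by
    refine ⟨⟨B₀, Or.inl hB₀⟩, ?_, ?_⟩
    · rintro B (hB | hB)
      · exact F.2.2.1 B hB
      · exact hAne.mono hB
    · rintro B (hB | hB) D hBD
      · exact Or.inl (F.2.2.2 B hB D hBD)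
      · exact Or.inr (hB.trans hBD)
  have hGlinked : Upfamily.Linked ⟨_, hGup⟩ := by
    rintro B (hB | hB) D (hD | hD)
    · exact hF.1 B hB D hD
    · obtain ⟨x, hx1, hx2⟩ := h B hB
      exact ⟨x, hx2, hD hx1⟩
    · obtain ⟨x, hx1, hx2⟩ := h D hD
      exact ⟨x, hB hx1, hx2⟩
    · obtain ⟨x, hx⟩ := hAne
      exact ⟨x, hB hx, hD hx⟩
  have heq := hF.2 ⟨_, hGup⟩ hGlinked (fun B hB => Or.inl hB)
  have hmem : A ∈ F.1 ∪ {B | A ⊆ B} := Or.inr (by exact subset_rfl (a := A))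
  rw [heq]
  exact hmem

lemma maxlinked_exists_disjoint {F : Upfamily Y} (hF : F.IsMaxLinked) {A : Set Y}
    (h : A ∉ F.1) : ∃ B ∈ F.1, A ∩ B = ∅ := by
  by_contra hc
  push_neg at hc
  exact h (maxlinked_mem_of_forall hF fun B hB => hc B hB)

lemma maxlinked_eq_principal {F : Upfamily Y} (hF : F.IsMaxLinked) {x : Y}
    (h : {x} ∈ F.1) : F = Upfamily.principal x := by
  refine Subtype.ext (Set.ext fun A => ⟨fun hA => ?_, fun hA => ?_⟩)
  · obtain ⟨y, hy1, hy2⟩ := hF.1 A hA {x} h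
    have hyx : y = x := hy2
    show x ∈ A
    exact hyx ▸ hy1
  · exact F.2.2.2 {x} h A (singleton_subset_iff.2 hA)

lemma principal_maxLinked (x : Y) : (Upfamily.principal x).IsMaxLinked := by
  refine ⟨fun A hA B hB => ⟨x, hA, hB⟩, fun G hG hsub => ?_⟩
  refine Subtype.ext (Set.ext fun A => ⟨fun hA => hsub hA, fun hA => ?_⟩)
  obtain ⟨y, hy1, hy2⟩ := hG A hA {x} (hsub (show x ∈ ({x} : Set Y) from rfl))
  have hyx : y = x := hy2
  show x ∈ A
  exact hyx ▸ hy1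

lemma maxlinked_compl_singleton_mem {F : Upfamily Y} (hF : F.IsMaxLinked) {x : Y}
    (h : F ≠ Upfamily.principal x) : {x}ᶜ ∈ F.1 := by
  have hx : {x} ∉ F.1 := fun hs => h (maxlinked_eq_principal hF hs)
  obtain ⟨B, hB, hdisj⟩ := maxlinked_exists_disjoint hF hx
  refine F.2.2.2 B hB _ fun y hy => ?_
  simp only [mem_compl_iff, mem_singleton_iff]
  rintro rfl
  have : y ∈ ({y} : Set Y) ∩ B := ⟨rfl, hy⟩
  rw [hdisj] at this
  exact this

lemma principal_mul_principal [Mul Y] (x y : Y) :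
    (Upfamily.principal x) * Upfamily.principal y = Upfamily.principal (x * y) := by
  refine Subtype.ext (Set.ext fun C => ?_)
  rw [mem_mul_iff']
  exact Iff.rfl

end AuxGeneral

instance L.instFinite {n : ℕ} : Finite (L n) := inferInstanceAs (Finite (Fin n))

section C2Ln

variable {n : ℕ}

local notation "XX" => OSum (Cgrp 2) (L n)
local notation "aX" => (Sum.inl (Multiplicative.ofAdd (1 : ZMod 2)) : OSum (Cgrp 2) (L n))

lemma g_cases (g : Cgrp 2) : g = 1 ∨ g = Multiplicative.ofAdd 1 := by revert g; decide

/-- The left part of `C`. -/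
def CLp (C : Set XX) : Set XX := {x | ∃ g : Cgrp 2, x = Sum.inl g ∧ x ∈ C}

/-- The `s`-section of the right part of `C`. -/
def mmp (s : L n) (C : Set XX) : Set XX :=
  {x | ∃ t : L n, x = Sum.inr t ∧ Sum.inr (s * t) ∈ C}

/-- The translate of `C` determining multiplication. -/
def tau (G : Upfamily XX) (C : Set XX) : Set XX :=
  CLp C ∪ {x | ∃ s : L n, x = Sum.inr s ∧ CLp C ∪ mmp s C ∈ G.1}

lemma Lmul_choice (s t : L n) : s * t = s ∨ s * t = t :=
  min_choice (α := Fin n) s t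

lemma Lmul_comm (s t : L n) : s * t = t * s :=
  min_comm (α := Fin n) s t

lemma mmp_chain (C : Set XX) (t t' : L n) :
    mmp t C ⊆ mmp t' C ∨ mmp t' C ⊆ mmp t C := by
  by_contra hc
  push_neg at hc
  obtain ⟨h1, h2⟩ := hc
  rw [Set.not_subset] at h1 h2
  obtain ⟨x, hx, hxn⟩ := h1
  obtain ⟨x', hx', hx'n⟩ := h2
  obtain ⟨u, rfl, hu⟩ := hx
  obtain ⟨u', rfl, hu'⟩ := hx'
  have h2' : Sum.inr (t' * u) ∉ C := fun h => hxn ⟨u, rfl, h⟩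
  have h4' : Sum.inr (t * u') ∉ C := fun h => hx'n ⟨u', rfl, h⟩
  rcases le_total (show Fin n from t) (show Fin n from t') with hle | hle
  · rcases le_total (show Fin n from u) (show Fin n from t) with h | h
    · have e1 : t * u = u := min_eq_right h
      have e2 : t' * u = u := min_eq_right (h.trans hle)
      rw [e1] at hu; rw [e2] at h2'; exact h2' hu
    · have e1 : t * u = t := min_eq_left h
      rw [e1] at hu
      rcases le_total (show Fin n from u') (show Fin n from t) with h' | h'
      · have e3 : t * u' = u' := min_eq_right h'
        have e4 : t' * u' = u' := min_eq_right (h'.trans hle)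
        rw [e3] at h4'; rw [e4] at hu'; exact h4' hu'
      · have e3 : t * u' = t := min_eq_left h'
        rw [e3] at h4'; exact h4' hu
  · rcases le_total (show Fin n from u') (show Fin n from t') with h | h
    · have e3 : t' * u' = u' := min_eq_right h
      have e4 : t * u' = u' := min_eq_right (h.trans hle)
      rw [e3] at hu'; rw [e4] at h4'; exact h4' hu'
    · have e3 : t' * u' = t' := min_eq_left h
      rw [e3] at hu'
      rcases le_total (show Fin n from u) (show Fin n from t') with h' | h'
      · have e1 : t * u = u := min_eq_right (h'.trans hle)
        have e2 : t' * u = u := min_eq_right h'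
        rw [e1] at hu; rw [e2] at h2'; exact h2' hu
      · have e2 : t' * u = t' := min_eq_left h'
        rw [e2] at h2'; exact h2' hu'

lemma A_eq_tau (G : Upfamily XX) (hG : G.IsMaxLinked)
    (hGa : G ≠ Upfamily.principal aX) (C : Set XX) :
    {x : XX | (fun y => x * y) ⁻¹' C ∈ G.1} = tau G C := by
  ext x
  cases x with
  | inl g =>
    constructor
    · intro hU
      refine Or.inl ⟨g, rfl, ?_⟩
      by_contra hgC
      have hsub : (fun y => (Sum.inl g : XX) * y) ⁻¹' C ⊆ {aX} := by
        rintro y hy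
        cases y with
        | inl h =>
          rcases g_cases h with rfl | rfl
          · refine absurd ?_ hgC
            have : (Sum.inl (g * 1) : XX) ∈ C := hy
            rwa [mul_one] at this
          · rfl
        | inr t => exact absurd hy hgC
      have : ({aX} : Set XX) ∈ G.1 := G.2.2.2 _ hU _ hsub
      exact hGa (maxlinked_eq_principal hG this)
    · rintro (⟨g', hg', hgC⟩ | ⟨s, hs, -⟩)
      · refine G.2.2.2 _ (maxlinked_compl_singleton_mem hG hGa) _ ?_
        intro y hy
        cases y with
        | inl h =>
          rcases g_cases h with rfl | rfl
          · show (Sum.inl (g * 1) : XX) ∈ C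
            rw [mul_one]
            exact hgC
          · exact absurd rfl hy
        | inr t => exact hgC
      · exact absurd hs (Sum.inl_ne_inr)
  | inr s =>
    have hpre : (fun y => (Sum.inr s : XX) * y) ⁻¹' C = CLp C ∪ mmp s C := by
      ext y
      cases y with
      | inl h =>
        constructor
        · intro hy
          exact Or.inl ⟨h, rfl, hy⟩
        · rintro (⟨g, hg, hgC⟩ | ⟨t, ht, -⟩)
          · exact hgC
          · exact absurd ht (Sum.inl_ne_inr)
      | inr t =>
        constructor
        · intro hy
          exact Or.inr ⟨t, rfl, hy⟩
        · rintro (⟨g, hg, -⟩ | ⟨t', ht', hC⟩)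
          · exact absurd hg (Sum.inr_ne_inl)
          · obtain rfl : t = t' := Sum.inr.inj ht'
            exact hC
    constructor
    · intro hU
      refine Or.inr ⟨s, rfl, ?_⟩
      rw [← hpre]
      exact hU
    · rintro (⟨g, hg, -⟩ | ⟨s', hs', hmem⟩)
      · exact absurd hg (Sum.inr_ne_inl)
      · obtain rfl : s = s' := Sum.inr.inj hs'
        show (fun y => (Sum.inr s : XX) * y) ⁻¹' C ∈ G.1
        rw [hpre]
        exact hmem

lemma mem_mul_iff_tau (F G : Upfamily XX) (hG : G.IsMaxLinked)
    (hGa : G ≠ Upfamily.principal aX) (C : Set XX) :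
    C ∈ (F * G).1 ↔ tau G C ∈ F.1 := by
  rw [mem_mul_iff', A_eq_tau G hG hGa]

lemma tau_self_mem (F : Upfamily XX) (hF : F.IsMaxLinked)
    (hFa : F ≠ Upfamily.principal aX) (C : Set XX) :
    tau F C ∈ F.1 ↔ C ∈ F.1 := by
  constructor
  · intro h
    by_contra hC
    obtain ⟨B, hB, hdisj⟩ := maxlinked_exists_disjoint hF hC
    refine hC (F.2.2.2 _ h C ?_)
    rintro x (⟨g, hg, hgC⟩ | ⟨s, rfl, hs⟩)
    · exact hgC
    · obtain ⟨y, hy1, hy2⟩ := hF.1 _ hs B hB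
      rcases hy1 with ⟨g, hg, hgC⟩ | ⟨t, rfl, ht⟩
      · have : y ∈ C ∩ B := ⟨hgC, hy2⟩
        rw [hdisj] at this
        exact this.elim
      · rcases Lmul_choice s t with he | he
        · rw [he] at ht
          exact ht
        · rw [he] at ht
          have : (Sum.inr t : XX) ∈ C ∩ B := ⟨ht, hy2⟩
          rw [hdisj] at this
          exact this.elim
  · intro hC
    refine F.2.2.2 C hC _ ?_
    intro x hx
    cases x with
    | inl g => exact Or.inl ⟨g, rfl, hx⟩
    | inr s =>
      refine Or.inr ⟨s, rfl, F.2.2.2 C hC _ ?_⟩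
      intro y hy
      cases y with
      | inl h => exact Or.inl ⟨h, rfl, hy⟩
      | inr t =>
        refine Or.inr ⟨t, rfl, ?_⟩
        rcases Lmul_choice s t with he | he
        · rw [he]; exact hx
        · rw [he]; exact hy

lemma tau_swap (F G : Upfamily XX) (hF : F.IsMaxLinked) (hG : G.IsMaxLinked)
    (hFa : F ≠ Upfamily.principal aX) (hGa : G ≠ Upfamily.principal aX)
    (C : Set XX) (h1 : tau G C ∈ F.1) : tau F C ∈ G.1 := by
  by_cases hW : ∃ s : L n, CLp C ∪ mmp s C ∈ G.1
  · obtain ⟨s₁, hs₁⟩ := hW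
    by_contra h2
    obtain ⟨E, hE, hdisjE⟩ := maxlinked_exists_disjoint hG h2
    have hwit : ∀ s : L n, CLp C ∪ mmp s C ∈ G.1 →
        ∃ t : L n, Sum.inr t ∈ E ∧ Sum.inr (s * t) ∈ C ∧ CLp C ∪ mmp t C ∉ F.1 := by
      intro s hs
      obtain ⟨y, hy1, hy2⟩ := hG.1 _ hs E hE
      rcases hy1 with hyCL | ⟨t, rfl, ht⟩
      · have : y ∈ tau F C ∩ E := ⟨Or.inl hyCL, hy2⟩
        rw [hdisjE] at this
        exact this.elim
      · refine ⟨t, hy2, ht, fun hmem => ?_⟩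
        have : (Sum.inr t : XX) ∈ tau F C ∩ E := ⟨Or.inr ⟨t, rfl, hmem⟩, hy2⟩
        rw [hdisjE] at this
        exact this.elim
    obtain ⟨t₁, ht₁E, -, ht₁F⟩ := hwit s₁ hs₁
    obtain ⟨t₀, ht₀, hmax⟩ := Set.Finite.exists_maximalFor (fun t : L n => mmp t C)
      {t : L n | Sum.inr t ∈ E ∧ CLp C ∪ mmp t C ∉ F.1} (Set.toFinite _)
      ⟨t₁, ht₁E, ht₁F⟩
    have hmax' : ∀ t : L n, Sum.inr t ∈ E → CLp C ∪ mmp t C ∉ F.1 →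
        mmp t C ⊆ mmp t₀ C := by
      intro t htE htF
      rcases mmp_chain C t t₀ with h | h
      · exact h
      · exact hmax ⟨htE, htF⟩ h
    obtain ⟨B, hB, hdisjB⟩ := maxlinked_exists_disjoint hF ht₀.2
    obtain ⟨z, hz1, hz2⟩ := hF.1 _ h1 B hB
    rcases hz1 with hzCL | ⟨s, rfl, hs⟩
    · have : z ∈ (CLp C ∪ mmp t₀ C) ∩ B := ⟨Or.inl hzCL, hz2⟩
      rw [hdisjB] at this
      exact this.elim
    · obtain ⟨t, htE, hstC, htF⟩ := hwit s hs
      have hsm : (Sum.inr s : XX) ∈ mmp t C := ⟨s, rfl, by rw [Lmul_comm]; exact hstC⟩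
      have : (Sum.inr s : XX) ∈ (CLp C ∪ mmp t₀ C) ∩ B :=
        ⟨Or.inr (hmax' t htE htF hsm), hz2⟩
      rw [hdisjB] at this
      exact this.elim
  · have hsub : tau G C ⊆ CLp C := by
      rintro x (hx | ⟨s, rfl, hs⟩)
      · exact hx
      · exact absurd ⟨s, hs⟩ hW
    have hCL : CLp C ∈ F.1 := F.2.2.2 _ h1 _ hsub
    have he : (Sum.inl (1 : Cgrp 2) : XX) ∈ C := by
      by_contra hne
      have hsub2 : CLp C ⊆ {aX} := by
        rintro x ⟨g, rfl, hgC⟩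
        rcases g_cases g with rfl | rfl
        · exact absurd hgC hne
        · rfl
      exact hFa (maxlinked_eq_principal hF (F.2.2.2 _ hCL _ hsub2))
    refine G.2.2.2 _ (maxlinked_compl_singleton_mem hG hGa) _ ?_
    intro x hx
    cases x with
    | inl g =>
      rcases g_cases g with rfl | rfl
      · exact Or.inl ⟨1, rfl, he⟩
      · exact absurd rfl hx
    | inr s =>
      exact Or.inr ⟨s, rfl, F.2.2.2 _ hCL _ subset_union_left⟩

lemma mul_self_of_ne (F : Upfamily XX) (hF : F.IsMaxLinked)
    (hFa : F ≠ Upfamily.principal aX) : F * F = F := by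
  refine Subtype.ext (Set.ext fun C => ?_)
  rw [mem_mul_iff_tau F F hF hFa, tau_self_mem F hF hFa]

lemma mul_comm_of_ne (F G : Upfamily XX) (hF : F.IsMaxLinked) (hG : G.IsMaxLinked)
    (hFa : F ≠ Upfamily.principal aX) (hGa : G ≠ Upfamily.principal aX) :
    F * G = G * F := by
  refine Subtype.ext (Set.ext fun C => ?_)
  rw [mem_mul_iff_tau F G hG hGa, mem_mul_iff_tau G F hF hFa]
  exact ⟨fun h => tau_swap F G hF hG hFa hGa C h, fun h => tau_swap G F hG hF hGa hFa C h⟩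

lemma mul_pa (F : Upfamily XX) (hF : F.IsMaxLinked)
    (hFa : F ≠ Upfamily.principal aX) :
    F * Upfamily.principal aX = Upfamily.principal aX := by
  refine Subtype.ext (Set.ext fun C => ?_)
  rw [mem_mul_iff']
  show {x : XX | (fun y => x * y) ⁻¹' C ∈ (Upfamily.principal aX).1} ∈ F.1 ↔ aX ∈ C
  constructor
  · intro h
    by_contra haC
    have hsub : {x : XX | (fun y => x * y) ⁻¹' C ∈ (Upfamily.principal aX).1} ⊆ {aX} := by
      intro x hx
      cases x with
      | inl g =>
        rcases g_cases g with rfl | rfl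
        · refine absurd ?_ haC
          have : (Sum.inl ((1 : Cgrp 2) * Multiplicative.ofAdd 1) : XX) ∈ C := hx
          rwa [one_mul] at this
        · rfl
      | inr t => exact absurd hx haC
    exact hFa (maxlinked_eq_principal hF (F.2.2.2 _ h _ hsub))
  · intro h
    refine F.2.2.2 _ (maxlinked_compl_singleton_mem hF hFa) _ ?_
    intro x hx
    show (fun y => x * y) ⁻¹' C ∈ (Upfamily.principal aX).1
    cases x with
    | inl g =>
      rcases g_cases g with rfl | rfl
      · show (Sum.inl ((1 : Cgrp 2) * Multiplicative.ofAdd 1) : XX) ∈ C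
        rw [one_mul]
        exact h
      · exact absurd rfl hx
    | inr t => exact h

lemma pa_mul (F : Upfamily XX) (hF : F.IsMaxLinked)
    (hFa : F ≠ Upfamily.principal aX) :
    Upfamily.principal aX * F = Upfamily.principal aX := by
  refine Subtype.ext (Set.ext fun C => ?_)
  rw [mem_mul_iff']
  show ((fun y => aX * y) ⁻¹' C ∈ F.1) ↔ aX ∈ C
  constructor
  · intro h
    by_contra haC
    have hsub : (fun y => aX * y) ⁻¹' C ⊆ {aX} := by
      intro y hy
      cases y with
      | inl h' =>
        rcases g_cases h' with rfl | rfl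
        · refine absurd ?_ haC
          have : (Sum.inl (Multiplicative.ofAdd (1 : ZMod 2) * 1) : XX) ∈ C := hy
          rwa [mul_one] at this
        · rfl
      | inr t => exact absurd hy haC
    exact hFa (maxlinked_eq_principal hF (F.2.2.2 _ h _ hsub))
  · intro h
    refine F.2.2.2 _ (maxlinked_compl_singleton_mem hF hFa) _ ?_
    intro y hy
    show aX * y ∈ C
    cases y with
    | inl h' =>
      rcases g_cases h' with rfl | rfl
      · show (Sum.inl (Multiplicative.ofAdd (1 : ZMod 2) * 1) : XX) ∈ C
        rw [mul_one]
        exact h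
      · exact absurd rfl hy
    | inr t => exact h

lemma pa_ne_pe :
    Upfamily.principal aX ≠ Upfamily.principal (Sum.inl (1 : Cgrp 2) : XX) := by
  intro h
  have hsets := congrArg Subtype.val h
  have h3 : ({aX} : Set XX) ∈ (Upfamily.principal (Sum.inl (1 : Cgrp 2) : XX)).1 :=
    hsets ▸ (show ({aX} : Set XX) ∈ (Upfamily.principal aX).1 from rfl)
  have h4 : (Sum.inl (1 : Cgrp 2) : XX) = aX := h3
  have h5 : (1 : Cgrp 2) = Multiplicative.ofAdd 1 := Sum.inl.inj h4
  exact (by decide : (1 : Cgrp 2) ≠ Multiplicative.ofAdd 1) h5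

lemma pa_not_idem : ¬ (Upfamily.principal aX * Upfamily.principal aX
    = Upfamily.principal aX) := by
  intro h
  rw [principal_mul_principal] at h
  have haa : aX * aX = (Sum.inl (1 : Cgrp 2) : XX) :=
    congrArg Sum.inl (by decide : Multiplicative.ofAdd (1 : ZMod 2) * Multiplicative.ofAdd 1 = 1)
  rw [haa] at h
  exact pa_ne_pe h.symm

end C2Ln
/-- Proposition 4.3: for every `n ≥ 1` and `X = C₂ ⊔ Lₙ`, the superextension `λ(X)`
is a finite commutative Boolean semigroup whose set of idempotents is
`λ(X) ∖ {⟨a⟩}`, where `a` is the unique generator of the subgroup `C₂` of `X`;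
moreover `𝓔 * ⟨a⟩ = ⟨a⟩` for every idempotent `𝓔` of `λ(X)`. -/
theorem superextension_C2_sqcup_Ln_boolean (n : ℕ) (hn : 1 ≤ n) :
    (lambdaS (OSum (Cgrp 2) (L n))).Finite ∧
      commOn (lambdaS (OSum (Cgrp 2) (L n))) ∧
      (∀ F ∈ lambdaS (OSum (Cgrp 2) (L n)), F * F * F = F) ∧
      {F ∈ lambdaS (OSum (Cgrp 2) (L n)) | F * F = F} =
        lambdaS (OSum (Cgrp 2) (L n)) \
          {Upfamily.principal
            (Sum.inl (Multiplicative.ofAdd (1 : ZMod 2)) : OSum (Cgrp 2) (L n))} ∧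
      ∀ F ∈ lambdaS (OSum (Cgrp 2) (L n)), F * F = F →
        F * Upfamily.principal
            (Sum.inl (Multiplicative.ofAdd (1 : ZMod 2)) : OSum (Cgrp 2) (L n)) =
          Upfamily.principal
            (Sum.inl (Multiplicative.ofAdd (1 : ZMod 2)) : OSum (Cgrp 2) (L n)) := by
  have hfinU : Finite (Upfamily (OSum (Cgrp 2) (L n))) :=
    inferInstanceAs (Finite {F : Set (Set (OSum (Cgrp 2) (L n))) // IsUpfamily F})
  set pa : Upfamily (OSum (Cgrp 2) (L n)) :=
    Upfamily.principal
      (Sum.inl (Multiplicative.ofAdd (1 : ZMod 2)) : OSum (Cgrp 2) (L n)) with hpa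
  have haa : (Sum.inl (Multiplicative.ofAdd (1 : ZMod 2)) : OSum (Cgrp 2) (L n)) *
      Sum.inl (Multiplicative.ofAdd (1 : ZMod 2)) = (Sum.inl (1 : Cgrp 2)) :=
    congrArg Sum.inl
      (by decide : Multiplicative.ofAdd (1 : ZMod 2) * Multiplicative.ofAdd 1 = 1)
  have h1a : (Sum.inl (1 : Cgrp 2) : OSum (Cgrp 2) (L n)) *
      Sum.inl (Multiplicative.ofAdd (1 : ZMod 2)) =
      (Sum.inl (Multiplicative.ofAdd (1 : ZMod 2))) :=
    congrArg Sum.inl (one_mul _)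
  refine ⟨Set.toFinite _, ?_, ?_, ?_, ?_⟩
  · -- commutativity
    intro F hF G hG
    by_cases hFa : F = pa
    · by_cases hGa : G = pa
      · rw [hFa, hGa]
      · rw [hFa, pa_mul G hG hGa, mul_pa G hG hGa]
    · by_cases hGa : G = pa
      · rw [hGa, pa_mul F hF hFa, mul_pa F hF hFa]
      · exact mul_comm_of_ne F G hF hG hFa hGa
  · -- Boolean
    intro F hF
    by_cases hFa : F = pa
    · rw [hFa, hpa, principal_mul_principal, principal_mul_principal, haa, h1a]
    · rw [mul_self_of_ne F hF hFa, mul_self_of_ne F hF hFa]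
  · -- idempotents
    ext F
    constructor
    · rintro ⟨hF, hid⟩
      refine ⟨hF, fun hmem => ?_⟩
      have hFa : F = pa := hmem
      rw [hFa, hpa, principal_mul_principal, haa] at hid
      exact pa_ne_pe hid.symm
    · rintro ⟨hF, hFa⟩
      exact ⟨hF, mul_self_of_ne F hF (fun h => hFa h)⟩
  · -- E * <a> = <a>
    intro F hF hid
    have hFa : F ≠ pa := by
      rintro rfl
      rw [hpa, principal_mul_principal, haa] at hid
      exact pa_ne_pe hid.symm
    exact mul_pa F hF hFa
end

section
/- For the cyclic group C₂ of order 2, the semigroups φ(C₂) and N₂(C₂) coincide, and this semigroup is isomorphic to L₁⊔C₂. -/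
open Set

section C2aux

open Upfamily

local notation "X2" => Cgrp 2

/-- The generator of `C₂`. -/
def gX : Cgrp 2 := Multiplicative.ofAdd (1 : ZMod 2)

lemma elem_cases (x : X2) : x = 1 ∨ x = gX := by
  revert x; decide

lemma one_ne_g : (1 : X2) ≠ gX := by decide

lemma exists_ne' (x : X2) : ∃ y : X2, y ≠ x := by
  rcases elem_cases x with h | h
  · exact ⟨gX, by rw [h]; exact one_ne_g.symm⟩
  · exact ⟨1, by rw [h]; exact one_ne_g⟩

lemma set_cases (A : Set X2) (hA : A.Nonempty) :
    A = {1} ∨ A = {gX} ∨ A = univ := by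
  by_cases he : (1 : X2) ∈ A <;> by_cases hg : gX ∈ A
  · right; right
    ext x; simp only [mem_univ, iff_true]
    rcases elem_cases x with h | h <;> rw [h] <;> assumption
  · left
    ext x; simp only [mem_singleton_iff]
    constructor
    · intro hx; rcases elem_cases x with h | h
      · exact h
      · exact absurd (h ▸ hx) hg
    · rintro rfl; exact he
  · right; left
    ext x; simp only [mem_singleton_iff]
    constructor
    · intro hx; rcases elem_cases x with h | h
      · exact absurd (h ▸ hx) he
      · exact h
    · rintro rfl; exact hg
  · obtain ⟨x, hx⟩ := hA
    rcases elem_cases x with h | h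
    · exact absurd (h ▸ hx) he
    · exact absurd (h ▸ hx) hg

/-- The trivial upfamily `⟨univ⟩ = {univ}`. -/
def u0 : Upfamily X2 :=
  ⟨{univ}, ⟨univ, rfl⟩, fun A hA => hA ▸ ⟨1, mem_univ _⟩, by
    rintro A (rfl : A = univ) B hAB
    show B = univ
    exact univ_subset_iff.mp hAB⟩

lemma u0_ne_principal (x : X2) : u0 ≠ Upfamily.principal x := by
  intro h
  have h1 : ({x} : Set X2) ∈ (Upfamily.principal x).1 := rfl
  rw [← h] at h1
  obtain ⟨y, hy⟩ := exists_ne' x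
  have : y ∈ ({x} : Set X2) := (h1 : ({x} : Set X2) = univ) ▸ mem_univ y
  exact hy this

lemma principal_inj {x y : X2} (h : Upfamily.principal x = Upfamily.principal y) : x = y := by
  have h1 : ({x} : Set X2) ∈ (Upfamily.principal x).1 := rfl
  rw [h] at h1
  exact (h1 : y ∈ ({x} : Set X2)).symm

lemma filter_linked {F : Upfamily X2} (h : F.IsFilter) : F.Linked :=
  fun A hA B hB => F.2.2.1 _ (h A hA B hB)

lemma u0_filter : u0.IsFilter := by
  rintro A (rfl : A = univ) B (rfl : B = univ)
  show univ ∩ univ = univ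
  simp

lemma principal_filter (x : X2) : (Upfamily.principal x).IsFilter :=
  fun A hA B hB => ⟨hA, hB⟩

lemma classify {F : Upfamily X2} (h : F.Linked) :
    F = u0 ∨ F = Upfamily.principal 1 ∨ F = Upfamily.principal gX := by
  obtain ⟨⟨A0, hA0⟩, hne, hup⟩ := F.2
  by_cases he : ({1} : Set X2) ∈ F.1 <;> by_cases hg : ({gX} : Set X2) ∈ F.1
  · obtain ⟨z, hz1, hz2⟩ := h _ he _ hg
    exact absurd ((hz1 : z = 1).symm.trans (hz2 : z = gX)) one_ne_g
  · right; left
    apply Subtype.ext; ext A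
    constructor
    · intro hA
      rcases set_cases A (hne A hA) with rfl | rfl | rfl
      · exact rfl
      · exact absurd hA hg
      · exact mem_univ (1 : X2)
    · intro hA
      exact hup _ he A (singleton_subset_iff.mpr hA)
  · right; right
    apply Subtype.ext; ext A
    constructor
    · intro hA
      rcases set_cases A (hne A hA) with rfl | rfl | rfl
      · exact absurd hA he
      · exact rfl
      · exact mem_univ gX
    · intro hA
      exact hup _ hg A (singleton_subset_iff.mpr hA)
  · left
    apply Subtype.ext; ext A
    constructor
    · intro hA
      rcases set_cases A (hne A hA) with rfl | rfl | rfl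
      · exact absurd hA he
      · exact absurd hA hg
      · rfl
    · rintro (rfl : A = univ)
      exact hup _ hA0 _ (subset_univ _)

lemma mul_val (F G : Upfamily X2) : (F * G).1 = upMul F.1 G.1 := rfl

lemma principal_mul (x y : X2) :
    Upfamily.principal x * Upfamily.principal y = Upfamily.principal (x * y) := by
  apply Subtype.ext; ext C
  constructor
  · rintro ⟨A, hA, B, hB, hsub⟩
    exact hsub (mem_biUnion hA ⟨y, hB x hA, rfl⟩)
  · intro hC
    refine ⟨{x}, rfl, fun _ => {y}, fun a _ => rfl, ?_⟩
    rintro z hz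
    simp only [mem_iUnion, mem_singleton_iff, image_singleton, exists_prop] at hz
    obtain ⟨a, rfl, hz⟩ := hz
    rw [hz]; exact hC

lemma u0_mul_principal (x : X2) : u0 * Upfamily.principal x = u0 := by
  apply Subtype.ext; ext C
  constructor
  · rintro ⟨A, (rfl : A = univ), B, hB, hsub⟩
    show C = univ
    refine eq_univ_of_forall fun z => hsub ?_
    refine mem_biUnion (mem_univ (z * x⁻¹)) ⟨x, hB _ (mem_univ _), ?_⟩
    simp
  · rintro (rfl : C = univ)
    exact ⟨univ, rfl, fun _ => univ, fun a _ => mem_univ x, subset_univ _⟩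

lemma principal_mul_u0 (x : X2) : Upfamily.principal x * u0 = u0 := by
  apply Subtype.ext; ext C
  constructor
  · rintro ⟨A, hA, B, hB, hsub⟩
    show C = univ
    refine eq_univ_of_forall fun z => hsub ?_
    refine mem_biUnion hA ⟨x⁻¹ * z, ?_, ?_⟩
    · rw [(hB x hA : B x = univ)]; exact mem_univ _
    · simp
  · rintro (rfl : C = univ)
    exact ⟨{x}, rfl, fun _ => univ, fun a _ => rfl, subset_univ _⟩

lemma u0_mul_u0 : u0 * u0 = u0 := by
  apply Subtype.ext; ext C
  constructor
  · rintro ⟨A, (rfl : A = univ), B, hB, hsub⟩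
    show C = univ
    refine eq_univ_of_forall fun z => hsub ?_
    refine mem_biUnion (mem_univ (1 : X2)) ⟨z, ?_, one_mul z⟩
    rw [(hB 1 (mem_univ _) : B 1 = univ)]; exact mem_univ _
  · rintro (rfl : C = univ)
    exact ⟨univ, rfl, fun _ => univ, fun a _ => rfl, subset_univ _⟩

end C2aux


/-- Proposition 4.7(1): `φ(C₂) = N₂(C₂)`, and this semigroup is isomorphic
to `L₁ ⊔ C₂`. -/
theorem filters_of_C2 :
    phiS (Cgrp 2) = N2S (Cgrp 2) ∧
      MulIsoOnto (OSum (L 1) (Cgrp 2)) (phiS (Cgrp 2)) := by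
  constructor
  · ext F
    simp only [phiS, N2S, mem_setOf_eq]
    constructor
    · exact filter_linked
    · intro h
      rcases classify h with rfl | rfl | rfl
      · exact u0_filter
      · exact principal_filter 1
      · exact principal_filter gX
  · refine ⟨fun s => Sum.elim (fun _ => u0) Upfamily.principal s, ?_, ?_, ?_⟩
    · rintro (a | a) (b | b) h
      · exact congrArg Sum.inl (Subsingleton.elim (α := Fin 1) a b)
      · exact absurd h (u0_ne_principal b)
      · exact absurd h.symm (u0_ne_principal a)
      · exact congrArg Sum.inr (principal_inj h)
    · apply Set.eq_of_subset_of_subset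
      · rintro F ⟨(a | a), rfl⟩
        · exact u0_filter
        · exact principal_filter a
      · intro F hF
        rcases classify (filter_linked hF) with rfl | rfl | rfl
        · exact ⟨Sum.inl ((0 : Fin 1) : L 1), rfl⟩
        · exact ⟨Sum.inr 1, rfl⟩
        · exact ⟨Sum.inr gX, rfl⟩
    · rintro (a | a) (b | b)
      · exact u0_mul_u0.symm
      · exact (u0_mul_principal b).symm
      · exact (principal_mul_u0 a).symm
      · exact (principal_mul a b).symm
end

section
/- For every n ≥ 1 the semigroup φ(Lₙ⊔C₂) is a commutative Boolean semigroup isomorphic to the reduced product φ(L_{n+1}) ×_{φ(Lₙ)} φ(C₂). -/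
open Set

theorem Upfamily.IsFilter.mul {X : Type*} [Mul X] {F G : Upfamily X}
    (hF : F.IsFilter) (hG : G.IsFilter) : (F * G).IsFilter := by
  rintro C1 ⟨A1, hA1, B1, hB1, hs1⟩ C2 ⟨A2, hA2, B2, hB2, hs2⟩
  refine ⟨A1 ∩ A2, hF A1 hA1 A2 hA2, fun a => B1 a ∩ B2 a,
    fun a ha => hG _ (hB1 a ha.1) _ (hB2 a ha.2), ?_⟩
  rintro x hx
  rw [mem_iUnion₂] at hx
  obtain ⟨a, ha, b, hb, rfl⟩ := hx
  exact ⟨hs1 (mem_biUnion ha.1 ⟨b, hb.1, rfl⟩), hs2 (mem_biUnion ha.2 ⟨b, hb.2, rfl⟩)⟩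

/-- The semigroup `φ(X)` of filters on `X`, as a type. -/
def PhiT (X : Type*) : Type _ := {F : Upfamily X // F.IsFilter}

instance {X : Type*} [Mul X] : Mul (PhiT X) :=
  ⟨fun F G => ⟨F.1 * G.1, F.2.mul G.2⟩⟩

/-- The map `υf : υ(X) → υ(Y)` induced by `f : X → Y`. -/
def upMap {X Y : Type*} (f : X → Y) (F : Upfamily X) : Upfamily Y :=
  ⟨{A : Set Y | f ⁻¹' A ∈ F.1},
    ⟨univ, by obtain ⟨A0, hA0⟩ := F.2.1; exact F.2.2.2 A0 hA0 _ (fun _ _ => trivial)⟩,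
    fun A hA => by obtain ⟨x, hx⟩ := F.2.2.1 _ hA; exact ⟨f x, hx⟩,
    fun A hA B hAB => F.2.2.2 _ hA _ (preimage_mono hAB)⟩

theorem upMap_isFilter {X Y : Type*} (f : X → Y) {F : Upfamily X} (hF : F.IsFilter) :
    (upMap f F).IsFilter := by
  intro A hA B hB
  have : f ⁻¹' (A ∩ B) ∈ F.1 := by rw [preimage_inter]; exact hF _ hA _ hB
  exact this

/-- The embedding `φ(Lₙ) → φ(L_{n+1})` induced by the inclusion `Lₙ ⊆ L_{n+1}`. -/
def embPhi (n : ℕ) (F : PhiT (L n)) : PhiT (L (n + 1)) :=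
  ⟨upMap (fun a : L n => show L (n + 1) from Fin.castSucc (show Fin n from a)) F.1,
    upMap_isFilter _ F.2⟩

/-- The reduced product `X ×_I Y` of semigroups `X`, `Y` over an ideal `I ⊆ X`. -/
def ReducedProd (M N : Type*) [Mul M] [Mul N] (I : Set M)
    (_hI : ∀ a b : M, a ∈ I ∨ b ∈ I → a * b ∈ I) : Type _ :=
  ↥I ⊕ ({a : M // a ∉ I} × N)

open scoped Classical in
noncomputable instance {M N : Type*} [Mul M] [Mul N] {I : Set M}
    {hI : ∀ a b : M, a ∈ I ∨ b ∈ I → a * b ∈ I} : Mul (ReducedProd M N I hI) :=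
  ⟨fun u v =>
    match u, v with
    | Sum.inl a, Sum.inl b => Sum.inl ⟨a.1 * b.1, hI _ _ (Or.inl a.2)⟩
    | Sum.inl a, Sum.inr bx => Sum.inl ⟨a.1 * bx.1.1, hI _ _ (Or.inl a.2)⟩
    | Sum.inr ax, Sum.inl b => Sum.inl ⟨ax.1.1 * b.1, hI _ _ (Or.inr b.2)⟩
    | Sum.inr ax, Sum.inr bx =>
        if h : ax.1.1 * bx.1.1 ∈ I then Sum.inl ⟨ax.1.1 * bx.1.1, h⟩
        else Sum.inr (⟨ax.1.1 * bx.1.1, h⟩, ax.2 * bx.2)⟩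


section KerMachinery

variable {X : Type*}

instance inst_s18 {n : ℕ} : Finite (L n) := inferInstanceAs (Finite (Fin n))

namespace PhiT

def ker (F : PhiT X) : Set X := ⋂₀ F.1.1

lemma up (F : PhiT X) {A B : Set X} (hA : A ∈ F.1.1) (hAB : A ⊆ B) : B ∈ F.1.1 :=
  F.1.2.2.2 A hA B hAB

lemma ker_subset (F : PhiT X) {A : Set X} (hA : A ∈ F.1.1) : F.ker ⊆ A :=
  sInter_subset_of_mem hA

lemma sInter_aux (F : PhiT X) (S : Finset (Set X)) :
    ∀ A ∈ F.1.1, ↑S ⊆ F.1.1 → A ∩ ⋂₀ ↑S ∈ F.1.1 := by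
  classical
  induction S using Finset.induction_on with
  | empty => intro A hA _; simpa using hA
  | @insert B T hB ih =>
      intro A hA hsub
      rw [Finset.coe_insert] at hsub ⊢
      have h1 : A ∩ B ∈ F.1.1 := F.2 A hA B (hsub (mem_insert _ _))
      have h2 := ih (A ∩ B) h1 (fun C hC => hsub (mem_insert_of_mem _ hC))
      rw [sInter_insert, show A ∩ (B ∩ ⋂₀ ↑T) = (A ∩ B) ∩ ⋂₀ ↑T from (inter_assoc _ _ _).symm]
      exact h2

lemma ker_mem [Finite X] (F : PhiT X) : F.ker ∈ F.1.1 := by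
  obtain ⟨A0, hA0⟩ := F.1.2.1
  have hfin : F.1.1.Finite := Set.toFinite _
  have h0 := F.sInter_aux hfin.toFinset A0 hA0 (by rw [hfin.coe_toFinset])
  rw [hfin.coe_toFinset] at h0
  have h : A0 ∩ F.ker ∈ F.1.1 := h0
  rwa [inter_eq_right.mpr (F.ker_subset hA0)] at h

lemma mem_iff [Finite X] (F : PhiT X) {A : Set X} : A ∈ F.1.1 ↔ F.ker ⊆ A :=
  ⟨F.ker_subset, fun h => F.up F.ker_mem h⟩

lemma ker_nonempty [Finite X] (F : PhiT X) : F.ker.Nonempty := F.1.2.2.1 _ F.ker_mem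

lemma ext_ker [Finite X] {F G : PhiT X} (h : F.ker = G.ker) : F = G := by
  apply Subtype.ext; apply Subtype.ext; ext A
  rw [F.mem_iff, G.mem_iff, h]

lemma mem_mul_iff [Mul X] [Finite X] (F G : PhiT X) {C : Set X} :
    C ∈ (F * G).1.1 ↔ image2 (· * ·) F.ker G.ker ⊆ C := by
  constructor
  · rintro ⟨A, hA, B, hB, hsub⟩
    rintro x ⟨a, ha, b, hb, rfl⟩
    exact hsub (mem_biUnion (F.ker_subset hA ha)
      ⟨b, G.ker_subset (hB a (F.ker_subset hA ha)) hb, rfl⟩)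
  · intro h
    refine ⟨F.ker, F.ker_mem, fun _ => G.ker, fun a _ => G.ker_mem, ?_⟩
    rintro x hx
    rw [mem_iUnion₂] at hx
    obtain ⟨a, ha, b, hb, rfl⟩ := hx
    exact h ⟨a, ha, b, hb, rfl⟩

lemma ker_mul [Mul X] [Finite X] (F G : PhiT X) :
    (F * G).ker = image2 (· * ·) F.ker G.ker :=
  subset_antisymm ((F * G).ker_subset ((F.mem_mul_iff G).mpr subset_rfl))
    (subset_sInter fun A hA => (F.mem_mul_iff G).mp hA)

def pUp (K : Set X) (hK : K.Nonempty) : PhiT X :=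
  ⟨⟨{A | K ⊆ A}, ⟨univ, subset_univ K⟩, fun A hA => hK.mono hA, fun A hA B hAB => hA.trans hAB⟩,
    fun A hA B hB => subset_inter hA hB⟩

@[simp] lemma ker_pUp (K : Set X) (hK : K.Nonempty) : (pUp K hK).ker = K :=
  subset_antisymm (sInter_subset_of_mem (subset_refl K)) (subset_sInter fun _ hA => hA)

lemma pUp_ker [Finite X] (F : PhiT X) : pUp F.ker F.ker_nonempty = F :=
  ext_ker (ker_pUp _ _)

lemma pUp_mul [Mul X] [Finite X] (K₁ K₂ : Set X) (h₁ : K₁.Nonempty) (h₂ : K₂.Nonempty) :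
    pUp K₁ h₁ * pUp K₂ h₂ = pUp (image2 (· * ·) K₁ K₂) (h₁.image2 h₂) :=
  ext_ker (by rw [ker_mul, ker_pUp, ker_pUp, ker_pUp])

end PhiT

end KerMachinery

section ElementFacts

lemma min_min_or {α : Type*} [LinearOrder α] (a b c : α) :
    min (min a b) c = a ∨ min (min a b) c = b ∨ min (min a b) c = c := by
  rcases min_cases (min a b) c with ⟨h1, _⟩ | ⟨h1, _⟩
  · rcases min_cases a b with ⟨h2, _⟩ | ⟨h2, _⟩
    · exact Or.inl (h1.trans h2)
    · exact Or.inr (Or.inl (h1.trans h2))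
  · exact Or.inr (Or.inr h1)

lemma c2_triple (x y z : Cgrp 2) : x * y * z = x ∨ x * y * z = y ∨ x * y * z = z := by
  revert x y z; decide

lemma c2_cube (x : Cgrp 2) : x * x * x = x := by revert x; decide

lemma osum_comm {n : ℕ} (x y : OSum (L n) (Cgrp 2)) : x * y = y * x := by
  rcases x with a | b <;> rcases y with a' | b'
  · exact congrArg Sum.inl (min_comm (show Fin n from a) a')
  · rfl
  · rfl
  · exact congrArg Sum.inr (mul_comm b b')

lemma osum_cube {n : ℕ} (x : OSum (L n) (Cgrp 2)) : x * x * x = x := by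
  rcases x with a | b
  · exact congrArg Sum.inl (show min (min (show Fin n from a) a) a = a by rw [min_self, min_self])
  · exact congrArg Sum.inr (c2_cube b)

lemma osum_triple {n : ℕ} (x y z : OSum (L n) (Cgrp 2)) :
    x * y * z = x ∨ x * y * z = y ∨ x * y * z = z := by
  rcases x with a | b <;> rcases y with a' | b' <;> rcases z with a'' | b''
  · rcases min_min_or (show Fin n from a) a' a'' with h | h | h
    · exact Or.inl (congrArg Sum.inl h)
    · exact Or.inr (Or.inl (congrArg Sum.inl h))
    · exact Or.inr (Or.inr (congrArg Sum.inl h))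
  · rcases min_cases (show Fin n from a) a' with ⟨h, _⟩ | ⟨h, _⟩
    · exact Or.inl (congrArg Sum.inl h)
    · exact Or.inr (Or.inl (congrArg Sum.inl h))
  · rcases min_cases (show Fin n from a) a'' with ⟨h, _⟩ | ⟨h, _⟩
    · exact Or.inl (congrArg Sum.inl h)
    · exact Or.inr (Or.inr (congrArg Sum.inl h))
  · exact Or.inl rfl
  · rcases min_cases (show Fin n from a') a'' with ⟨h, _⟩ | ⟨h, _⟩
    · exact Or.inr (Or.inl (congrArg Sum.inl h))
    · exact Or.inr (Or.inr (congrArg Sum.inl h))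
  · exact Or.inr (Or.inl rfl)
  · exact Or.inr (Or.inr rfl)
  · rcases c2_triple b b' b'' with h | h | h
    · exact Or.inl (congrArg Sum.inr h)
    · exact Or.inr (Or.inl (congrArg Sum.inr h))
    · exact Or.inr (Or.inr (congrArg Sum.inr h))

end ElementFacts

section Emb

/-- The inclusion `L n → L (n+1)`. -/
def cs (n : ℕ) : L n → L (n + 1) := fun a => Fin.castSucc (show Fin n from a)

lemma cs_injective (n : ℕ) : Function.Injective (cs n) :=
  fun a b h => Fin.castSucc_injective n h

lemma cs_ne_last {n : ℕ} (j : L n) : cs n j ≠ (show L (n + 1) from Fin.last n) :=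
  (Fin.castSucc_lt_last (show Fin n from j)).ne

lemma mem_range_cs_iff {n : ℕ} (i : L (n + 1)) :
    i ∈ Set.range (cs n) ↔ (show Fin (n + 1) from i) ≠ Fin.last n := by
  constructor
  · rintro ⟨j, rfl⟩; exact cs_ne_last j
  · intro h
    obtain ⟨j, hj⟩ := Fin.exists_castSucc_eq.mpr h
    exact ⟨j, hj⟩

lemma L_mul_def {m : ℕ} (a b : L m) : a * b = (min (show Fin m from a) b : Fin m) := rfl

lemma mul_mem_range_cs {n : ℕ} {u v : L (n + 1)}
    (h : u ∈ Set.range (cs n) ∨ v ∈ Set.range (cs n)) : u * v ∈ Set.range (cs n) := by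
  simp only [mem_range_cs_iff] at h ⊢
  intro hlast
  rcases h with h | h
  · exact h (le_antisymm (Fin.le_last u)
      (hlast ▸ min_le_left (show Fin (n+1) from u) v))
  · exact h (le_antisymm (Fin.le_last v)
      (hlast ▸ min_le_right (show Fin (n+1) from u) v))

lemma embPhi_eq (n : ℕ) (F : PhiT (L n)) :
    embPhi n F = PhiT.pUp (cs n '' F.ker) (F.ker_nonempty.image _) := by
  apply Subtype.ext; apply Subtype.ext; ext A
  show (cs n) ⁻¹' A ∈ F.1.1 ↔ A ∈ {B | cs n '' F.ker ⊆ B}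
  rw [F.mem_iff]
  exact (image_subset_iff).symm

lemma ker_embPhi (n : ℕ) (F : PhiT (L n)) : (embPhi n F).ker = cs n '' F.ker := by
  rw [embPhi_eq, PhiT.ker_pUp]

lemma mem_rangeEmb_iff {n : ℕ} (G : PhiT (L (n + 1))) :
    G ∈ Set.range (embPhi n) ↔ G.ker ⊆ Set.range (cs n) := by
  constructor
  · rintro ⟨F, rfl⟩
    rw [ker_embPhi]
    exact image_subset_range _ _
  · intro h
    have hne : ((cs n) ⁻¹' G.ker).Nonempty := by
      obtain ⟨x, hx⟩ := G.ker_nonempty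
      obtain ⟨j, rfl⟩ := h hx
      exact ⟨j, hx⟩
    refine ⟨PhiT.pUp _ hne, PhiT.ext_ker ?_⟩
    rw [ker_embPhi, PhiT.ker_pUp]
    exact image_preimage_eq_of_subset h

lemma last_mem_ker_of_not_mem_range {n : ℕ} {G : PhiT (L (n + 1))}
    (h : G ∉ Set.range (embPhi n)) : (show L (n+1) from Fin.last n) ∈ G.ker := by
  rw [mem_rangeEmb_iff] at h
  obtain ⟨x, hx, hxr⟩ := not_subset.mp h
  rw [mem_range_cs_iff] at hxr
  push_neg at hxr
  exact hxr ▸ hx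

lemma idealI (n : ℕ) : ∀ a b : PhiT (L (n + 1)),
    a ∈ Set.range (embPhi n) ∨ b ∈ Set.range (embPhi n) →
      a * b ∈ Set.range (embPhi n) := by
  intro a b h
  simp only [mem_rangeEmb_iff] at h ⊢
  rw [PhiT.ker_mul]
  rintro x ⟨u, hu, v, hv, rfl⟩
  rcases h with h | h
  · exact mul_mem_range_cs (Or.inl (h hu))
  · exact mul_mem_range_cs (Or.inr (h hv))

end Emb

section Low

lemma cs_mul {n : ℕ} (a b : L n) : cs n (a * b) = cs n a * cs n b := by
  show Fin.castSucc (min (show Fin n from a) b) =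
    min (Fin.castSucc (show Fin n from a)) (Fin.castSucc (show Fin n from b))
  rcases le_total (show Fin n from a) b with h | h
  · rw [min_eq_left h, min_eq_left (Fin.castSucc_le_castSucc_iff.mpr h)]
  · rw [min_eq_right h, min_eq_right (Fin.castSucc_le_castSucc_iff.mpr h)]

lemma image2_low_subset {n : ℕ} (K₁ K₂ : Set (L (n + 1))) :
    image2 (· * ·) (cs n ⁻¹' K₁) (cs n ⁻¹' K₂) ⊆ cs n ⁻¹' (image2 (· * ·) K₁ K₂) := by
  rintro x ⟨u, hu, v, hv, rfl⟩
  show cs n (u * v) ∈ image2 (· * ·) K₁ K₂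
  rw [cs_mul]
  exact ⟨cs n u, hu, cs n v, hv, rfl⟩

lemma min_last_right {n : ℕ} (u : L (n + 1)) : u * (show L (n+1) from Fin.last n) = u :=
  min_eq_left (Fin.le_last (show Fin (n+1) from u))

lemma min_last_left {n : ℕ} (u : L (n + 1)) : (show L (n+1) from Fin.last n) * u = u :=
  min_eq_right (Fin.le_last (show Fin (n+1) from u))

lemma cs_eq_or {n : ℕ} (x : L (n + 1)) :
    (∃ u : L n, x = cs n u) ∨ x = (show L (n+1) from Fin.last n) :=
  Fin.eq_castSucc_or_eq_last (show Fin (n+1) from x)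

/-- Case both kernels inside the range. -/
lemma low_image2_rr {n : ℕ} {K₁ K₂ : Set (L (n + 1))}
    (h₁ : K₁ ⊆ Set.range (cs n)) (h₂ : K₂ ⊆ Set.range (cs n)) :
    cs n ⁻¹' (image2 (· * ·) K₁ K₂) = image2 (· * ·) (cs n ⁻¹' K₁) (cs n ⁻¹' K₂) := by
  apply subset_antisymm _ (image2_low_subset K₁ K₂)
  rintro a ⟨x, hx, y, hy, hxy⟩
  beta_reduce at hxy
  obtain ⟨u, rfl⟩ := h₁ hx
  obtain ⟨v, rfl⟩ := h₂ hy
  rw [← cs_mul] at hxy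
  exact ⟨u, hx, v, hy, cs_injective n hxy⟩

lemma low_image2_rl {n : ℕ} {K₁ K₂ : Set (L (n + 1))}
    (h₁ : K₁ ⊆ Set.range (cs n)) (h₂ : (show L (n+1) from Fin.last n) ∈ K₂) :
    cs n ⁻¹' (image2 (· * ·) K₁ K₂) =
      image2 (· * ·) (cs n ⁻¹' K₁) (cs n ⁻¹' K₂) ∪ cs n ⁻¹' K₁ := by
  apply subset_antisymm
  · rintro a ⟨x, hx, y, hy, hxy⟩
    beta_reduce at hxy
    obtain ⟨u, rfl⟩ := h₁ hx
    rcases cs_eq_or y with ⟨v, rfl⟩ | rfl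
    · rw [← cs_mul] at hxy
      exact Or.inl ⟨u, hx, v, hy, cs_injective n hxy⟩
    · rw [min_last_right] at hxy
      right
      show cs n a ∈ K₁
      rw [← hxy]; exact hx
  · apply union_subset (image2_low_subset K₁ K₂)
    intro a ha
    exact ⟨cs n a, ha, _, h₂, min_last_right _⟩

lemma low_image2_lr {n : ℕ} {K₁ K₂ : Set (L (n + 1))}
    (h₁ : (show L (n+1) from Fin.last n) ∈ K₁) (h₂ : K₂ ⊆ Set.range (cs n)) :
    cs n ⁻¹' (image2 (· * ·) K₁ K₂) =
      image2 (· * ·) (cs n ⁻¹' K₁) (cs n ⁻¹' K₂) ∪ cs n ⁻¹' K₂ := by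
  apply subset_antisymm
  · rintro a ⟨x, hx, y, hy, hxy⟩
    beta_reduce at hxy
    obtain ⟨v, rfl⟩ := h₂ hy
    rcases cs_eq_or x with ⟨u, rfl⟩ | rfl
    · rw [← cs_mul] at hxy
      exact Or.inl ⟨u, hx, v, hy, cs_injective n hxy⟩
    · rw [min_last_left] at hxy
      right
      show cs n a ∈ K₂
      rw [← hxy]; exact hy
  · apply union_subset (image2_low_subset K₁ K₂)
    intro a ha
    exact ⟨_, h₁, cs n a, ha, min_last_left _⟩

lemma low_image2_ll {n : ℕ} {K₁ K₂ : Set (L (n + 1))}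
    (h₁ : (show L (n+1) from Fin.last n) ∈ K₁) (h₂ : (show L (n+1) from Fin.last n) ∈ K₂) :
    cs n ⁻¹' (image2 (· * ·) K₁ K₂) =
      image2 (· * ·) (cs n ⁻¹' K₁) (cs n ⁻¹' K₂) ∪ cs n ⁻¹' K₁ ∪ cs n ⁻¹' K₂ := by
  apply subset_antisymm
  · rintro a ⟨x, hx, y, hy, hxy⟩
    beta_reduce at hxy
    rcases cs_eq_or x with ⟨u, rfl⟩ | rfl
    · rcases cs_eq_or y with ⟨v, rfl⟩ | rfl
      · rw [← cs_mul] at hxy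
        exact Or.inl (Or.inl ⟨u, hx, v, hy, cs_injective n hxy⟩)
      · rw [min_last_right] at hxy
        exact Or.inl (Or.inr (show cs n a ∈ K₁ by rw [← hxy]; exact hx))
    · rw [min_last_left] at hxy
      exact Or.inr (show cs n a ∈ K₂ by rw [← hxy]; exact hy)
  · apply union_subset (union_subset (image2_low_subset K₁ K₂) ?_) ?_
    · intro a ha
      exact ⟨cs n a, ha, _, h₂, min_last_right _⟩
    · intro a ha
      exact ⟨_, h₁, cs n a, ha, min_last_left _⟩

lemma last_mem_image2 {n : ℕ} {K₁ K₂ : Set (L (n + 1))}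
    (h₁ : (show L (n+1) from Fin.last n) ∈ K₁) (h₂ : (show L (n+1) from Fin.last n) ∈ K₂) :
    (show L (n+1) from Fin.last n) ∈ image2 (· * ·) K₁ K₂ :=
  ⟨_, h₁, _, h₂, min_last_right _⟩

end Low

section SumImage

variable {A B : Type*} [Mul A] [Mul B]

lemma image2_inl_inl (s t : Set A) :
    image2 (· * ·) (Sum.inl '' s : Set (OSum A B)) (Sum.inl '' t) =
      Sum.inl '' image2 (· * ·) s t := by
  rw [image2_image_left, image2_image_right, image_image2]
  rfl

lemma image2_inr_inr (s t : Set B) :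
    image2 (· * ·) (Sum.inr '' s : Set (OSum A B)) (Sum.inr '' t) =
      Sum.inr '' image2 (· * ·) s t := by
  rw [image2_image_left, image2_image_right, image_image2]
  rfl

lemma image2_inl_inr (s : Set A) {t : Set B} (ht : t.Nonempty) :
    image2 (· * ·) (Sum.inl '' s : Set (OSum A B)) (Sum.inr '' t) = Sum.inl '' s := by
  ext x
  constructor
  · rintro ⟨-, ⟨a, ha, rfl⟩, -, ⟨b, hb, rfl⟩, rfl⟩
    exact ⟨a, ha, rfl⟩
  · rintro ⟨a, ha, rfl⟩
    obtain ⟨b, hb⟩ := ht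
    exact ⟨Sum.inl a, ⟨a, ha, rfl⟩, Sum.inr b, ⟨b, hb, rfl⟩, rfl⟩

lemma image2_inr_inl {t : Set B} (ht : t.Nonempty) (s : Set A) :
    image2 (· * ·) (Sum.inr '' t : Set (OSum A B)) (Sum.inl '' s) = Sum.inl '' s := by
  ext x
  constructor
  · rintro ⟨-, ⟨b, hb, rfl⟩, -, ⟨a, ha, rfl⟩, rfl⟩
    exact ⟨a, ha, rfl⟩
  · rintro ⟨a, ha, rfl⟩
    obtain ⟨b, hb⟩ := ht
    exact ⟨Sum.inr b, ⟨b, hb, rfl⟩, Sum.inl a, ⟨a, ha, rfl⟩, rfl⟩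

lemma sum_decomp (W : Set (OSum A B)) :
    W = Sum.inl '' (Sum.inl ⁻¹' W) ∪ Sum.inr '' (Sum.inr ⁻¹' W) := by
  ext x
  rcases x with a | b
  · simp
  · simp

end SumImage

section Main

lemma low_nonempty {n : ℕ} {G : PhiT (L (n + 1))} (h : G ∈ Set.range (embPhi n)) :
    (cs n ⁻¹' G.ker).Nonempty := by
  rw [mem_rangeEmb_iff] at h
  obtain ⟨x, hx⟩ := G.ker_nonempty
  obtain ⟨j, rfl⟩ := h hx
  exact ⟨j, hx⟩

/-- The underlying map of the isomorphism. -/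
noncomputable def Phi (n : ℕ) :
    ReducedProd (PhiT (L (n + 1))) (PhiT (Cgrp 2)) (Set.range (embPhi n)) (idealI n) →
      PhiT (OSum (L n) (Cgrp 2))
  | Sum.inl G => PhiT.pUp (Sum.inl '' (cs n ⁻¹' G.1.ker)) ((low_nonempty G.2).image _)
  | Sum.inr GH => PhiT.pUp
      (Sum.inl '' (cs n ⁻¹' GH.1.1.ker) ∪ Sum.inr '' GH.2.ker)
      (Set.Nonempty.mono subset_union_right ((GH.2.ker_nonempty).image _))

lemma Phi_inl {n : ℕ} (G) : Phi n (Sum.inl G) =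
    PhiT.pUp (Sum.inl '' (cs n ⁻¹' G.1.ker)) ((low_nonempty G.2).image _) := rfl

lemma Phi_inr {n : ℕ} (GH) : Phi n (Sum.inr GH) =
    PhiT.pUp (Sum.inl '' (cs n ⁻¹' GH.1.1.ker) ∪ Sum.inr '' GH.2.ker)
      (Set.Nonempty.mono subset_union_right ((GH.2.ker_nonempty).image _)) := rfl

section RPmul

variable {M N : Type*} [Mul M] [Mul N] {I : Set M}
  {hI : ∀ a b : M, a ∈ I ∨ b ∈ I → a * b ∈ I}

lemma RP_mul_inl_inl (a b : ↥I) :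
    (show ReducedProd M N I hI from Sum.inl a) * (show ReducedProd M N I hI from Sum.inl b) =
      (show ReducedProd M N I hI from Sum.inl ⟨a.1 * b.1, hI _ _ (Or.inl a.2)⟩) :=
  rfl

lemma RP_mul_inl_inr (a : ↥I) (bx : {a : M // a ∉ I} × N) :
    (show ReducedProd M N I hI from Sum.inl a) * (show ReducedProd M N I hI from Sum.inr bx) =
      (show ReducedProd M N I hI from Sum.inl ⟨a.1 * bx.1.1, hI _ _ (Or.inl a.2)⟩) := rfl

lemma RP_mul_inr_inl (ax : {a : M // a ∉ I} × N) (b : ↥I) :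
    (show ReducedProd M N I hI from Sum.inr ax) * (show ReducedProd M N I hI from Sum.inl b) =
      (show ReducedProd M N I hI from Sum.inl ⟨ax.1.1 * b.1, hI _ _ (Or.inr b.2)⟩) := rfl

open scoped Classical in
lemma RP_mul_inr_inr (ax bx : {a : M // a ∉ I} × N) :
    (show ReducedProd M N I hI from Sum.inr ax) * (show ReducedProd M N I hI from Sum.inr bx) =
      if h : ax.1.1 * bx.1.1 ∈ I then (show ReducedProd M N I hI from Sum.inl ⟨ax.1.1 * bx.1.1, h⟩)
      else (show ReducedProd M N I hI from Sum.inr (⟨ax.1.1 * bx.1.1, h⟩, ax.2 * bx.2)) := rfl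

end RPmul

lemma sum_union_inj {α β : Type*} {A₁ A₂ : Set α} {B₁ B₂ : Set β}
    (h : (Sum.inl '' A₁ ∪ Sum.inr '' B₁ : Set (α ⊕ β)) = Sum.inl '' A₂ ∪ Sum.inr '' B₂) :
    A₁ = A₂ ∧ B₁ = B₂ := by
  constructor
  · ext a
    simpa using Set.ext_iff.mp h (Sum.inl a)
  · ext b
    simpa using Set.ext_iff.mp h (Sum.inr b)

lemma ker_eq_union_last {n : ℕ} {K : Set (L (n + 1))}
    (h : (show L (n+1) from Fin.last n) ∈ K) :
    K = cs n '' (cs n ⁻¹' K) ∪ {(show L (n+1) from Fin.last n)} := by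
  ext x
  constructor
  · intro hx
    rcases cs_eq_or x with ⟨u, rfl⟩ | rfl
    · exact Or.inl ⟨u, hx, rfl⟩
    · exact Or.inr rfl
  · rintro (⟨u, hu, rfl⟩ | hx)
    · exact hu
    · rw [mem_singleton_iff] at hx
      rw [hx]
      exact h

lemma phi_inj {n : ℕ} : Function.Injective (Phi n) := by
  rintro (G | GH) (G' | GH') huv
  · have hker := congrArg PhiT.ker huv
    rw [Phi_inl, Phi_inl, PhiT.ker_pUp, PhiT.ker_pUp] at hker
    have h2 : cs n ⁻¹' G.1.ker = cs n ⁻¹' G'.1.ker :=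
      Set.image_injective.mpr Sum.inl_injective hker
    have h3 : G.1.ker = G'.1.ker := by
      rw [← image_preimage_eq_of_subset ((mem_rangeEmb_iff _).1 G.2),
        ← image_preimage_eq_of_subset ((mem_rangeEmb_iff _).1 G'.2), h2]
    exact congrArg Sum.inl (Subtype.ext (PhiT.ext_ker h3))
  · exfalso
    have hker := congrArg PhiT.ker huv
    rw [Phi_inl, Phi_inr, PhiT.ker_pUp, PhiT.ker_pUp] at hker
    obtain ⟨b, hb⟩ := GH'.2.ker_nonempty
    have : (Sum.inr b : OSum (L n) (Cgrp 2)) ∈ Sum.inl '' (cs n ⁻¹' G.1.ker) := by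
      rw [hker]; exact Or.inr ⟨b, hb, rfl⟩
    obtain ⟨a, -, ha⟩ := this
    exact Sum.inl_ne_inr ha
  · exfalso
    have hker := congrArg PhiT.ker huv
    rw [Phi_inl, Phi_inr, PhiT.ker_pUp, PhiT.ker_pUp] at hker
    obtain ⟨b, hb⟩ := GH.2.ker_nonempty
    have : (Sum.inr b : OSum (L n) (Cgrp 2)) ∈ Sum.inl '' (cs n ⁻¹' G'.1.ker) := by
      rw [← hker]; exact Or.inr ⟨b, hb, rfl⟩
    obtain ⟨a, -, ha⟩ := this
    exact Sum.inl_ne_inr ha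
  · have hker := congrArg PhiT.ker huv
    rw [Phi_inr, Phi_inr, PhiT.ker_pUp, PhiT.ker_pUp] at hker
    obtain ⟨hA, hB⟩ := sum_union_inj hker
    have h3 : GH.1.1.ker = GH'.1.1.ker := by
      rw [ker_eq_union_last (last_mem_ker_of_not_mem_range GH.1.2),
        ker_eq_union_last (last_mem_ker_of_not_mem_range GH'.1.2), hA]
    exact congrArg Sum.inr (Prod.ext (Subtype.ext (PhiT.ext_ker h3)) (PhiT.ext_ker hB))

/-- `Fin.last n`, typed as an element of `L (n+1)`. -/
def lastL (n : ℕ) : L (n + 1) := Fin.last n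

lemma phi_surj {n : ℕ} : Function.Surjective (Phi n) := by
  intro F
  by_cases hR : (Sum.inr ⁻¹' F.ker : Set (Cgrp 2)).Nonempty
  · refine ⟨Sum.inr ⟨⟨PhiT.pUp
      (cs n '' (Sum.inl ⁻¹' F.ker) ∪ {lastL n})
      (Set.Nonempty.mono subset_union_right (singleton_nonempty _)), ?_⟩, PhiT.pUp (Sum.inr ⁻¹' F.ker) hR⟩, ?_⟩
    · rw [mem_rangeEmb_iff, PhiT.ker_pUp]
      intro hsub
      exact (mem_range_cs_iff _).1 (hsub (Or.inr rfl)) rfl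
    · apply PhiT.ext_ker
      simp only [Phi_inr, PhiT.ker_pUp]
      rw [preimage_union, preimage_image_eq _ (cs_injective n)]
      have hempty : (cs n ⁻¹' {lastL n}) = (∅ : Set (L n)) := by
        ext a
        simp only [mem_preimage, mem_singleton_iff, mem_empty_iff_false, iff_false]
        exact cs_ne_last a
      rw [hempty, union_empty]
      exact (sum_decomp F.ker).symm
  · have hWL : (Sum.inl ⁻¹' F.ker : Set (L n)).Nonempty := by
      obtain ⟨x, hx⟩ := F.ker_nonempty
      rcases x with a | b
      · exact ⟨a, hx⟩
      · exact absurd ⟨b, hx⟩ hR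
    refine ⟨Sum.inl ⟨PhiT.pUp (cs n '' (Sum.inl ⁻¹' F.ker)) (hWL.image _), ?_⟩, ?_⟩
    · rw [mem_rangeEmb_iff, PhiT.ker_pUp]
      exact image_subset_range _ _
    · apply PhiT.ext_ker
      simp only [Phi_inl, PhiT.ker_pUp]
      rw [preimage_image_eq _ (cs_injective n)]
      have h0 : (Sum.inr ⁻¹' F.ker : Set (Cgrp 2)) = ∅ := not_nonempty_iff_eq_empty.mp hR
      have := sum_decomp F.ker
      rw [h0, image_empty, union_empty] at this
      exact this.symm

lemma phi_mul {n : ℕ} (u v : ReducedProd (PhiT (L (n + 1))) (PhiT (Cgrp 2))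
    (Set.range (embPhi n)) (idealI n)) : Phi n (u * v) = Phi n u * Phi n v := by
  rcases u with G | GH <;> rcases v with G' | GH'
  · rw [RP_mul_inl_inl, Phi_inl, Phi_inl, Phi_inl, PhiT.pUp_mul]
    apply PhiT.ext_ker
    simp only [PhiT.ker_pUp]
    rw [PhiT.ker_mul, low_image2_rr ((mem_rangeEmb_iff _).1 G.2) ((mem_rangeEmb_iff _).1 G'.2),
      image2_inl_inl]
  · rw [RP_mul_inl_inr, Phi_inl, Phi_inl, Phi_inr, PhiT.pUp_mul]
    apply PhiT.ext_ker
    simp only [PhiT.ker_pUp]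
    rw [PhiT.ker_mul,
      low_image2_rl ((mem_rangeEmb_iff _).1 G.2) (last_mem_ker_of_not_mem_range GH'.1.2),
      image2_union_right, image2_inl_inl, image2_inl_inr _ GH'.2.ker_nonempty, image_union]
  · rw [RP_mul_inr_inl, Phi_inl, Phi_inr, Phi_inl, PhiT.pUp_mul]
    apply PhiT.ext_ker
    simp only [PhiT.ker_pUp]
    rw [PhiT.ker_mul,
      low_image2_lr (last_mem_ker_of_not_mem_range GH.1.2) ((mem_rangeEmb_iff _).1 G'.2),
      image2_union_left, image2_inl_inl, image2_inr_inl GH.2.ker_nonempty, image_union]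
  · have hnot : GH.1.1 * GH'.1.1 ∉ Set.range (embPhi n) := by
      rw [mem_rangeEmb_iff, PhiT.ker_mul]
      intro hsub
      exact (mem_range_cs_iff _).1
        (hsub (last_mem_image2 (last_mem_ker_of_not_mem_range GH.1.2)
          (last_mem_ker_of_not_mem_range GH'.1.2))) rfl
    rw [RP_mul_inr_inr, dif_neg hnot, Phi_inr, Phi_inr, Phi_inr, PhiT.pUp_mul]
    apply PhiT.ext_ker
    simp only [PhiT.ker_pUp]
    rw [PhiT.ker_mul, PhiT.ker_mul,
      low_image2_ll (last_mem_ker_of_not_mem_range GH.1.2)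
        (last_mem_ker_of_not_mem_range GH'.1.2),
      image2_union_left, image2_union_right, image2_union_right,
      image2_inl_inl, image2_inl_inr _ GH'.2.ker_nonempty,
      image2_inr_inl GH.2.ker_nonempty, image2_inr_inr,
      image_union, image_union]
    ext x
    simp only [mem_union]
    tauto

end Main

/-- Proposition 4.8(2): for every `n ≥ 1`, the semigroup `φ(Lₙ ⊔ C₂)` is a
commutative Boolean semigroup isomorphic to the reduced product
`φ(L_{n+1}) ×_{φ(Lₙ)} φ(C₂)`, where `φ(Lₙ)` is identified with an ideal of
`φ(L_{n+1})` via the embedding induced by the inclusion `Lₙ ⊆ L_{n+1}`. -/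
theorem filters_of_Ln_sqcup_C2_reduced_product (n : ℕ) (hn : 1 ≤ n) :
    (∀ F G : PhiT (OSum (L n) (Cgrp 2)), F * G = G * F) ∧
      (∀ F : PhiT (OSum (L n) (Cgrp 2)), F * F * F = F) ∧
      ∃ hI : ∀ a b : PhiT (L (n + 1)),
          a ∈ Set.range (embPhi n) ∨ b ∈ Set.range (embPhi n) →
            a * b ∈ Set.range (embPhi n),
        Nonempty
          (ReducedProd (PhiT (L (n + 1))) (PhiT (Cgrp 2)) (Set.range (embPhi n)) hI ≃*
            PhiT (OSum (L n) (Cgrp 2))) := by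
  refine ⟨fun F G => PhiT.ext_ker ?_, fun F => PhiT.ext_ker ?_, idealI n,
    ⟨MulEquiv.mk (Equiv.ofBijective (Phi n) ⟨phi_inj, phi_surj⟩) phi_mul⟩⟩
  · rw [PhiT.ker_mul, PhiT.ker_mul]
    exact Set.image2_comm fun a b => osum_comm a b
  · rw [PhiT.ker_mul, PhiT.ker_mul]
    apply subset_antisymm
    · rintro x ⟨w, ⟨a, ha, b, hb, rfl⟩, c, hc, hx⟩
      have hx' : a * b * c = x := hx
      rw [← hx']
      rcases osum_triple a b c with h | h | h <;> rw [h] <;> assumption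
    · intro x hx
      exact ⟨x * x, ⟨x, hx, x, hx, rfl⟩, x, hx, osum_cube x⟩
end

section
/- Let X be a semigroup and let x, y be commuting idempotents of X with xy ∉ {x, y}. Then the linked upfamily 𝓛 = ⟨{x,y},{x,xy},{y,xy}⟩ on X satisfies 𝓛 ≠ 𝓛*𝓛 = ⟨{xy}⟩ = 𝓛*𝓛*𝓛, and 𝓛 is not a regular element of the semigroup υ(X) (there is no upfamily 𝓐 ∈ υ(X) with 𝓛*𝓐*𝓛 = 𝓛). -/
open Set

/-- The maximal linked upfamily `𝓛 = ⟨{x,y},{x,xy},{y,xy}⟩` (as a family of subsets). -/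
def triangleFam {X : Type*} [Mul X] (x y : X) : Set (Set X) :=
  {A | ({x, y} : Set X) ⊆ A ∨ ({x, x * y} : Set X) ⊆ A ∨ ({y, x * y} : Set X) ⊆ A}

/-- Claim 6.3 (key computation): if `x, y` are commuting idempotents of a semigroup `X`
with `xy ∉ {x,y}`, then the linked upfamily `𝓛 = ⟨{x,y},{x,xy},{y,xy}⟩` satisfies
`𝓛 ≠ 𝓛*𝓛 = ⟨{xy}⟩ = 𝓛*𝓛*𝓛`, and `𝓛` is not a regular element of `υ(X)`. -/
theorem triangle_of_incomparable_idempotents_not_regular {X : Type*} [Semigroup X]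
    (x y : X) (hx : x * x = x) (hy : y * y = y) (hc : x * y = y * x)
    (hnx : x * y ≠ x) (hny : x * y ≠ y) :
    IsUpfamily (triangleFam x y) ∧
      (∀ A ∈ triangleFam x y, ∀ B ∈ triangleFam x y, (A ∩ B).Nonempty) ∧
      triangleFam x y ≠ upMul (triangleFam x y) (triangleFam x y) ∧
      upMul (triangleFam x y) (triangleFam x y) = {A : Set X | x * y ∈ A} ∧
      upMul (upMul (triangleFam x y) (triangleFam x y)) (triangleFam x y) =
        {A : Set X | x * y ∈ A} ∧
      ¬∃ A : Set (Set X), IsUpfamily A ∧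
        upMul (upMul (triangleFam x y) A) (triangleFam x y) = triangleFam x y := by
  have hxz : x * (x * y) = x * y := by rw [← mul_assoc, hx]
  have hyz : y * (x * y) = x * y := by rw [← mul_assoc, ← hc, mul_assoc, hy]
  have hzx : (x * y) * x = x * y := by rw [mul_assoc, ← hc, ← mul_assoc, hx]
  have hzy : (x * y) * y = x * y := by rw [mul_assoc, hy]
  have hzz : (x * y) * (x * y) = x * y := by rw [← mul_assoc, hzx, hzy]
  have mx1 : x ∈ ({x, y} : Set X) := mem_insert _ _
  have my1 : y ∈ ({x, y} : Set X) := mem_insert_of_mem _ rfl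
  have mx2 : x ∈ ({x, x * y} : Set X) := mem_insert _ _
  have mz2 : x * y ∈ ({x, x * y} : Set X) := mem_insert_of_mem _ rfl
  have my3 : y ∈ ({y, x * y} : Set X) := mem_insert _ _
  have mz3 : x * y ∈ ({y, x * y} : Set X) := mem_insert_of_mem _ rfl
  have hm1 : ({x, y} : Set X) ∈ triangleFam x y := Or.inl subset_rfl
  have hm2 : ({x, x * y} : Set X) ∈ triangleFam x y := Or.inr (Or.inl subset_rfl)
  have hm3 : ({y, x * y} : Set X) ∈ triangleFam x y := Or.inr (Or.inr subset_rfl)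
  have hup : IsUpfamily (triangleFam x y) := by
    refine ⟨⟨{x, y}, hm1⟩, ?_, ?_⟩
    · rintro A (h | h | h)
      exacts [⟨x, h mx1⟩, ⟨x, h mx2⟩, ⟨y, h my3⟩]
    · rintro A (h | h | h) B hAB
      exacts [Or.inl (h.trans hAB), Or.inr (Or.inl (h.trans hAB)),
        Or.inr (Or.inr (h.trans hAB))]
  have hlinked : ∀ A ∈ triangleFam x y, ∀ B ∈ triangleFam x y, (A ∩ B).Nonempty := by
    rintro A (h1 | h1 | h1) B (h2 | h2 | h2)
    exacts [⟨x, h1 mx1, h2 mx1⟩, ⟨x, h1 mx1, h2 mx2⟩, ⟨y, h1 my1, h2 my3⟩,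
      ⟨x, h1 mx2, h2 mx1⟩, ⟨x, h1 mx2, h2 mx2⟩, ⟨x * y, h1 mz2, h2 mz3⟩,
      ⟨y, h1 my3, h2 my1⟩, ⟨x * y, h1 mz3, h2 mz2⟩, ⟨y, h1 my3, h2 my3⟩]
  have hgetB : ∀ D ∈ triangleFam x y, ∃ s ∈ D, s = x ∨ s = y ∨ s = x * y := by
    rintro D (h | h | h)
    exacts [⟨x, h mx1, Or.inl rfl⟩, ⟨x, h mx2, Or.inl rfl⟩,
      ⟨y, h my3, Or.inr (Or.inl rfl)⟩]
  have hgetYZ : ∀ D ∈ triangleFam x y, ∃ s ∈ D, s = y ∨ s = x * y := by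
    rintro D (h | h | h)
    exacts [⟨y, h my1, Or.inl rfl⟩, ⟨x * y, h mz2, Or.inr rfl⟩, ⟨y, h my3, Or.inl rfl⟩]
  have hgetXZ : ∀ D ∈ triangleFam x y, ∃ s ∈ D, s = x ∨ s = x * y := by
    rintro D (h | h | h)
    exacts [⟨x, h mx1, Or.inl rfl⟩, ⟨x, h mx2, Or.inl rfl⟩, ⟨x * y, h mz3, Or.inr rfl⟩]
  have horz : ∀ s : X, (s = x ∨ s = y ∨ s = x * y) →
      ∀ D ∈ triangleFam x y, ∃ b ∈ D, s * b = x * y := by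
    intro s hs D hD
    rcases hs with h | h | h
    · obtain ⟨b, hb, h' | h'⟩ := hgetYZ D hD
      · exact ⟨b, hb, by rw [h, h']⟩
      · exact ⟨b, hb, by rw [h, h', hxz]⟩
    · obtain ⟨b, hb, h' | h'⟩ := hgetXZ D hD
      · exact ⟨b, hb, by rw [h, h', ← hc]⟩
      · exact ⟨b, hb, by rw [h, h', hyz]⟩
    · obtain ⟨b, hb, h' | h' | h'⟩ := hgetB D hD
      · exact ⟨b, hb, by rw [h, h', hzx]⟩
      · exact ⟨b, hb, by rw [h, h', hzy]⟩
      · exact ⟨b, hb, by rw [h, h', hzz]⟩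
  have key : upMul (triangleFam x y) (triangleFam x y) = {A : Set X | x * y ∈ A} := by
    ext C
    constructor
    · rintro ⟨A, hA, B, hB, hsub⟩
      obtain ⟨a, ha, hcase⟩ := hgetB A hA
      obtain ⟨b, hb, hab⟩ := horz a hcase (B a) (hB a ha)
      exact hsub (mem_biUnion ha ⟨b, hb, hab⟩)
    · intro hC
      refine ⟨{x, x * y}, hm2, fun _ => {y, x * y}, fun a _ => hm3, ?_⟩
      intro w hw
      simp only [mem_iUnion, mem_image] at hw
      obtain ⟨a, ha, b, hb, rfl⟩ := hw
      simp only [mem_insert_iff, mem_singleton_iff] at ha hb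
      show a * b ∈ C
      rcases ha with h | h <;> rcases hb with h' | h' <;> rw [h, h']
      exacts [hC, by rw [hxz]; exact hC, by rw [hzy]; exact hC, by rw [hzz]; exact hC]
  have key2 : upMul {A : Set X | x * y ∈ A} (triangleFam x y) = {A : Set X | x * y ∈ A} := by
    ext C
    constructor
    · rintro ⟨A, hA, B, hB, hsub⟩
      obtain ⟨b, hb, hab⟩ := horz (x * y) (Or.inr (Or.inr rfl)) (B (x * y)) (hB _ hA)
      exact hsub (mem_biUnion hA ⟨b, hb, hab⟩)
    · intro hC
      refine ⟨{x * y}, rfl, fun _ => {x, x * y}, fun a _ => hm2, ?_⟩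
      intro w hw
      simp only [mem_iUnion, mem_image, mem_singleton_iff] at hw
      obtain ⟨a, rfl, b, hb, rfl⟩ := hw
      simp only [mem_insert_iff, mem_singleton_iff] at hb
      show (x * y) * b ∈ C
      rcases hb with h | h <;> rw [h]
      exacts [by rw [hzx]; exact hC, by rw [hzz]; exact hC]
  have hne : triangleFam x y ≠ upMul (triangleFam x y) (triangleFam x y) := by
    intro h
    have h2 := hm1
    rw [h, key] at h2
    rcases (by simpa using h2 : x * y = x ∨ x * y = y) with h' | h'
    exacts [hnx h', hny h']
  refine ⟨hup, hlinked, hne, key, by rw [key]; exact key2, ?_⟩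
  rintro ⟨A, hAup, heq⟩
  have h1 : ({x, y} : Set X) ∈ upMul (upMul (triangleFam x y) A) (triangleFam x y) := by
    rw [heq]; exact hm1
  obtain ⟨A1, hA1, B, hB, hsub⟩ := h1
  obtain ⟨A2, hA2, B', hB', hsub'⟩ := hA1
  have zcase : x * y ∈ A2 → False := by
    intro hzA2
    obtain ⟨c, hcA⟩ := hAup.2.1 _ (hB' _ hzA2)
    have hzc : (x * y) * c ∈ A1 := hsub' (mem_biUnion hzA2 ⟨c, hcA, rfl⟩)
    obtain ⟨s, hs, -⟩ := hgetB (B ((x * y) * c)) (hB _ hzc)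
    have hw : ((x * y) * c) * s ∈ ({x, y} : Set X) := hsub (mem_biUnion hzc ⟨s, hs, rfl⟩)
    have hzw : (x * y) * (((x * y) * c) * s) = ((x * y) * c) * s := by
      rw [← mul_assoc, ← mul_assoc, hzz]
    rcases (by simpa using hw : ((x * y) * c) * s = x ∨ ((x * y) * c) * s = y)
      with hwx | hwy
    · rw [hwx, hzx] at hzw; exact hnx hzw
    · rw [hwy, hzy] at hzw; exact hny hzw
  rcases hA2 with h2 | h2 | h2
  · have hxA2 : x ∈ A2 := h2 mx1
    obtain ⟨c, hcA⟩ := hAup.2.1 _ (hB' x hxA2)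
    have hxc : x * c ∈ A1 := hsub' (mem_biUnion hxA2 ⟨c, hcA, rfl⟩)
    obtain ⟨s, hs, hsyz⟩ := hgetYZ (B (x * c)) (hB _ hxc)
    have hw : (x * c) * s ∈ ({x, y} : Set X) := hsub (mem_biUnion hxc ⟨s, hs, rfl⟩)
    have hxw : x * ((x * c) * s) = (x * c) * s := by rw [← mul_assoc, ← mul_assoc, hx]
    have hss : s * s = s := by
      rcases hsyz with h | h
      · rw [h]; exact hy
      · rw [h]; exact hzz
    have hws : ((x * c) * s) * s = (x * c) * s := by rw [mul_assoc, hss]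
    rcases (by simpa using hw : (x * c) * s = x ∨ (x * c) * s = y) with hwx | hwy
    · rw [hwx] at hws
      rcases hsyz with h | h
      · rw [h] at hws; exact hnx hws
      · rw [h, hxz] at hws; exact hnx hws
    · rw [hwy] at hxw
      exact hny hxw
  · exact zcase (h2 mz2)
  · exact zcase (h2 mz3)
end
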